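/- Fix transformations φ : F₁ → F₂ and ψ : F₂ → F₃ dinatural in all of their variables, and a morphism f : A → B of B. Let (M, L, f) be a labelled marking of the composite graph Γ(ψ) ∘ Γ(φ), let M' be a marking reachable from M by successively firing pairwise distinct transitions t₁, …, t_q each of which is labelled B by L, and let L' agree with L except that L'(t_r) = A for r = 1, …, q. Then (M', L', f) is a labelled marking and ⟨M, L, f⟩ = ⟨M', L', f⟩ as morphisms of C. -/

import Mathlib

open CategoryTheory Opposite

universe v u v' u'

/-- `SignObj B s` is `B` if the sign `s` is `true` (covariant) and `Bᵒᵖ` if `s` is `false`. -/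
def SignObj (B : Type u) : Bool → Type u
  | true => B
  | false => Bᵒᵖ

instance signObjCategory (B : Type u) [Category.{v} B] : ∀ s : Bool, Category.{v} (SignObj B s)
  | true => inferInstanceAs (Category.{v} B)
  | false => inferInstanceAs (Category.{v} Bᵒᵖ)

/-- Interpret an object of `B` as an object of `B` or `Bᵒᵖ`, according to a sign. -/
def toSign {B : Type u} : ∀ s : Bool, B → SignObj B s
  | true, X => X
  | false, X => op X

/-- Forget the sign of an object. -/
def unSign {B : Type u} : ∀ {s : Bool}, SignObj B s → B
  | true, X => X
  | false, X => unop X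

/-- A morphism of `B`, pointing in a direction prescribed by a sign. -/
def SignHom {B : Type u} [Category.{v} B] : Bool → B → B → Type v
  | true, X, Y => X ⟶ Y
  | false, X, Y => Y ⟶ X

def toSignHom {B : Type u} [Category.{v} B] : ∀ {s : Bool} {X Y : B},
    SignHom s X Y → (toSign s X ⟶ toSign s Y)
  | true, _, _, f => f
  | false, _, _, f => f.op

def signId {B : Type u} [Category.{v} B] : ∀ (s : Bool) (X : B), SignHom s X X
  | true, X => 𝟙 X
  | false, X => 𝟙 X

/-- The mixed-variance power category `B^α`. -/
abbrev PowCat (B : Type u) [Category.{v} B] {κ : Type} (α : κ → Bool) : Type u :=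
  ∀ j : κ, SignObj B (α j)

/-- The object of `B^α` whose `j`-th entry is `A (σ j)`. -/
abbrev tup {B : Type u} [Category.{v} B] {κ ι : Type} (α : κ → Bool) (σ : κ → ι)
    (A : ι → B) : PowCat B α :=
  fun j => toSign (α j) (A (σ j))

/-- A transformation `φ : F → G` of type `σ, τ`: a family of morphisms
`φ_𝐀 : F (𝐀 σ) ⟶ G (𝐀 τ)` indexed by tuples `𝐀` of objects of `B`. -/
def Transf {B : Type u} [Category.{v} B] {C : Type u'} [Category.{v'} C] {κa κb ι : Type}
    (α : κa → Bool) (β : κb → Bool) (F : PowCat B α ⥤ C) (G : PowCat B β ⥤ C)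
    (σ : κa → ι) (τ : κb → ι) : Type _ :=
  ∀ A : ι → B, F.obj (tup α σ A) ⟶ G.obj (tup β τ A)

/-- The tuple `A` with its `i`-th entry replaced by `X`. -/
abbrev upd {ι : Type} [DecidableEq ι] {B : Type u} (A : ι → B) (i : ι) (X : B) : ι → B :=
  fun k => if k = i then X else A k

/-- The mixed-variance tuple `𝐀[X,Y/i]σ`: entries over the `i`-th variable are
`e false` in contravariant positions, `e true` in covariant ones. -/
abbrev tupMV {B : Type u} [Category.{v} B] {κ ι : Type} [DecidableEq ι] (α : κ → Bool)
    (σ : κ → ι) (A : ι → B) (i : ι) (e : Bool → B) : PowCat B α :=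
  fun j => toSign (α j) (if σ j = i then e (α j) else A (σ j))

def mvHom {B : Type u} [Category.{v} B] {e₁ e₂ : Bool → B}
    (g : e₂ false ⟶ e₁ false) (h : e₁ true ⟶ e₂ true) :
    ∀ s : Bool, SignHom s (e₁ s) (e₂ s)
  | true => h
  | false => g

/-- The canonical morphism `tupMV α σ A i e₁ ⟶ tupMV α σ A i e₂` acting by `h` on
covariant entries over `i`, (the opposite of) `g` on contravariant entries over `i`, and
the identity elsewhere. -/
def tupMVHom {B : Type u} [Category.{v} B] {κ ι : Type} [DecidableEq ι] (α : κ → Bool)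
    (σ : κ → ι) (A : ι → B) (i : ι) (e₁ e₂ : Bool → B)
    (g : e₂ false ⟶ e₁ false) (h : e₁ true ⟶ e₂ true) :
    tupMV α σ A i e₁ ⟶ tupMV α σ A i e₂ :=
  fun j => toSignHom
    (show SignHom (α j) (if σ j = i then e₁ (α j) else A (σ j))
        (if σ j = i then e₂ (α j) else A (σ j)) from
      if hj : σ j = i then by simp only [if_pos hj]; exact mvHom g h (α j)
      else by simp only [if_neg hj]; exact signId (α j) (A (σ j)))

/-- Dinaturality of a transformation in its `i`-th variable. -/
def DinatAt {B : Type u} [Category.{v} B] {C : Type u'} [Category.{v'} C] {κa κb ι : Type}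
    [DecidableEq ι] {α : κa → Bool} {β : κb → Bool} {F : PowCat B α ⥤ C} {G : PowCat B β ⥤ C}
    {σ : κa → ι} {τ : κb → ι} (φ : Transf α β F G σ τ) (i : ι) : Prop :=
  ∀ (A : ι → B) {X Y : B} (f : X ⟶ Y),
    F.map (tupMVHom α σ A i (fun s => bif s then X else Y) (fun _ => X) f (𝟙 X)) ≫
        φ (upd A i X) ≫
        G.map (tupMVHom β τ A i (fun _ => X) (fun s => bif s then Y else X) (𝟙 X) f) =
      F.map (tupMVHom α σ A i (fun s => bif s then X else Y) (fun _ => Y) (𝟙 Y) f) ≫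
        φ (upd A i Y) ≫
        G.map (tupMVHom β τ A i (fun _ => Y) (fun s => bif s then Y else X) f (𝟙 Y))

/-- Vertical composition of transformations along a cocone `ζ, ξ` on their types. -/
def vcomp {B : Type u} [Category.{v} B] {C : Type u'} [Category.{v'} C]
    {κa κb κc ι₁ ι₂ ι : Type} {α : κa → Bool} {β : κb → Bool} {γ : κc → Bool}
    {F : PowCat B α ⥤ C} {G : PowCat B β ⥤ C} {H : PowCat B γ ⥤ C}
    {σ : κa → ι₁} {τ : κb → ι₁} {η : κb → ι₂} {θ : κc → ι₂}
    (φ : Transf α β F G σ τ) (ψ : Transf β γ G H η θ)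
    (ζ : ι₁ → ι) (ξ : ι₂ → ι) (hcomm : ∀ p, ζ (τ p) = ξ (η p)) :
    Transf α γ F H (fun p => ζ (σ p)) (fun p => ξ (θ p)) :=
  fun A =>
    φ (fun x => A (ζ x)) ≫
      eqToHom (congrArg G.obj (by
        funext j
        show toSign (β j) (A (ζ (τ j))) = toSign (β j) (A (ξ (η j)))
        rw [hcomm j])) ≫
      ψ (fun x => A (ξ x))

section LabelledMarkings

variable {B : Type u} [Category.{v} B] {C : Type u'} [Category.{v'} C]
  {wa wb wc n m : ℕ}

/-- Places of the composite graph `Γ(ψ) ∘ Γ(φ)`: the arguments of the three functors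
involved, with the middle ones identified. -/
abbrev CGP (wa wb wc : ℕ) : Type := Fin wa ⊕ (Fin wb ⊕ Fin wc)

/-- Transitions of the composite graph `Γ(ψ) ∘ Γ(φ)`: the variables of `φ` followed by
those of `ψ`. -/
abbrev CGT (n m : ℕ) : Type := Fin n ⊕ Fin m

variable (α : Fin wa → Bool) (β : Fin wb → Bool) (γ : Fin wc → Bool)
  (σ₁ : Fin wa → Fin n) (τ₁ : Fin wb → Fin n)
  (σ₂ : Fin wb → Fin m) (τ₂ : Fin wc → Fin m)

/-- The (at most one) input transition of each place of the composite graph. -/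
def cgIn : CGP wa wb wc → Option (CGT n m)
  | .inl p => bif α p then none else some (.inl (σ₁ p))
  | .inr (.inl p) => some (bif β p then .inl (τ₁ p) else .inr (σ₂ p))
  | .inr (.inr p) => bif γ p then some (.inr (τ₂ p)) else none

/-- The (at most one) output transition of each place of the composite graph. -/
def cgOut : CGP wa wb wc → Option (CGT n m)
  | .inl p => bif α p then some (.inl (σ₁ p)) else none
  | .inr (.inl p) => some (bif β p then .inr (σ₂ p) else .inl (τ₁ p))
  | .inr (.inr p) => bif γ p then none else some (.inr (τ₂ p))

/-- A transition is enabled when each of its input places carries a token. -/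
def cgEnabled (M : CGP wa wb wc → ℕ) (t : CGT n m) : Prop :=
  ∀ p, cgOut α β γ σ₁ τ₁ σ₂ τ₂ p = some t → 1 ≤ M p

/-- Firing a transition of the composite graph. -/
def cgFire (M : CGP wa wb wc → ℕ) (t : CGT n m) : CGP wa wb wc → ℕ :=
  fun p =>
    if cgOut α β γ σ₁ τ₁ σ₂ τ₂ p = some t then M p - 1
    else if cgIn α β γ σ₁ τ₁ σ₂ τ₂ p = some t then M p + 1
    else M p

/-- Firing sequences of (enabled) transitions on the composite graph. -/
inductive CGFireSeq : (CGP wa wb wc → ℕ) → List (CGT n m) → (CGP wa wb wc → ℕ) → Prop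
  | nil (M : CGP wa wb wc → ℕ) : CGFireSeq M [] M
  | cons {M M' : CGP wa wb wc → ℕ} (t : CGT n m) (ts : List (CGT n m)) :
      cgEnabled α β γ σ₁ τ₁ σ₂ τ₂ M t →
      CGFireSeq (cgFire α β γ σ₁ τ₁ σ₂ τ₂ M t) ts M' → CGFireSeq M (t :: ts) M'

variable {X Y : B}

/-- Interpret a label (`false` for the domain `X`, `true` for the codomain `Y` of the
fixed morphism `f : X ⟶ Y`) as an object of `B`. -/
def Lob (X Y : B) (b : Bool) : B := bif b then Y else X

/-- A labelled marking `(M, L, f)` for the composite graph, for `f : X ⟶ Y`: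
`M` is a `{0,1}`-marking and `L` labels each transition with `X` (label `false`) or `Y`
(label `true`), coherently with `M`. -/
structure IsLabelledMarking (X Y : B) (M : CGP wa wb wc → ℕ) (L : CGT n m → Bool) : Prop where
  le_one : ∀ p, M p ≤ 1
  in_label : ∀ p t, M p = 1 → cgIn α β γ σ₁ τ₁ σ₂ τ₂ p = some t → L t = false
  out_label : ∀ p t, M p = 1 → cgOut α β γ σ₁ τ₁ σ₂ τ₂ p = some t → L t = true
  eq_label : ∀ p t t', M p = 0 → cgIn α β γ σ₁ τ₁ σ₂ τ₂ p = some t →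
    cgOut α β γ σ₁ τ₁ σ₂ τ₂ p = some t' → L t = L t'

/-- The tuple of objects (labels) at which the component of `φ` is taken. -/
def L1 (X Y : B) (L : CGT n m → Bool) : Fin n → B := fun t => Lob X Y (L (.inl t))

/-- The tuple of objects (labels) at which the component of `ψ` is taken. -/
def L2 (X Y : B) (L : CGT n m → Bool) : Fin m → B := fun t => Lob X Y (L (.inr t))

/-- The domain tuple of the morphism associated to a labelled marking: a marked place
contributes `X` covariantly and `Y` contravariantly, an unmarked one the label of its
adjacent transition. -/
def startT (M : CGP wa wb wc → ℕ) (L : CGT n m → Bool) (X Y : B) : PowCat B α :=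
  fun j => toSign (α j)
    (if M (.inl j) = 1 then (bif α j then X else Y) else Lob X Y (L (.inl (σ₁ j))))

/-- The codomain tuple of the morphism associated to a labelled marking. -/
def endT (M : CGP wa wb wc → ℕ) (L : CGT n m → Bool) (X Y : B) : PowCat B γ :=
  fun j => toSign (γ j)
    (if M (.inr (.inr j)) = 1 then (bif γ j then Y else X) else Lob X Y (L (.inr (τ₂ j))))

variable {M : CGP wa wb wc → ℕ} {L : CGT n m → Bool}

/-- The morphism with components `x¹` (the marked-place entries are `f`). -/
def mor1 (hLM : IsLabelledMarking α β γ σ₁ τ₁ σ₂ τ₂ X Y M L) (f : X ⟶ Y) :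
    startT α σ₁ M L X Y ⟶ tup α σ₁ (L1 X Y L) :=
  fun j => toSignHom
    (show SignHom (α j)
        (if M (.inl j) = 1 then (bif α j then X else Y) else Lob X Y (L (.inl (σ₁ j))))
        (Lob X Y (L (.inl (σ₁ j)))) from by
      by_cases hM : M (.inl j) = 1
      · simp only [if_pos hM]
        cases hα : α j
        · have hL : L (.inl (σ₁ j)) = false :=
            hLM.in_label _ _ hM (by simp [cgIn, hα])
          rw [hL]; exact f
        · have hL : L (.inl (σ₁ j)) = true :=
            hLM.out_label _ _ hM (by simp [cgOut, hα])
          rw [hL]; exact f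
      · simp only [if_neg hM]
        exact signId (α j) (Lob X Y (L (.inl (σ₁ j)))))

/-- The morphism with components `x²`. -/
def mor2 (hLM : IsLabelledMarking α β γ σ₁ τ₁ σ₂ τ₂ X Y M L) (f : X ⟶ Y) :
    tup β τ₁ (L1 X Y L) ⟶ tup β σ₂ (L2 X Y L) :=
  fun j => toSignHom
    (show SignHom (β j) (Lob X Y (L (.inl (τ₁ j)))) (Lob X Y (L (.inr (σ₂ j)))) from by
      by_cases hM : M (.inr (.inl j)) = 1
      · cases hβ : β j
        · have h1 : L (.inr (σ₂ j)) = false :=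
            hLM.in_label _ _ hM (by simp [cgIn, hβ])
          have h2 : L (.inl (τ₁ j)) = true :=
            hLM.out_label _ _ hM (by simp [cgOut, hβ])
          rw [h1, h2]; exact f
        · have h1 : L (.inl (τ₁ j)) = false :=
            hLM.in_label _ _ hM (by simp [cgIn, hβ])
          have h2 : L (.inr (σ₂ j)) = true :=
            hLM.out_label _ _ hM (by simp [cgOut, hβ])
          rw [h1, h2]; exact f
      · have hM0 : M (.inr (.inl j)) = 0 := by
          have := hLM.le_one (.inr (.inl j)); omega
        cases hβ : β j
        · have h : L (.inr (σ₂ j)) = L (.inl (τ₁ j)) :=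
            hLM.eq_label _ _ _ hM0 (by simp [cgIn, hβ]) (by simp [cgOut, hβ])
          rw [h]; exact signId false (Lob X Y (L (.inl (τ₁ j))))
        · have h : L (.inl (τ₁ j)) = L (.inr (σ₂ j)) :=
            hLM.eq_label _ _ _ hM0 (by simp [cgIn, hβ]) (by simp [cgOut, hβ])
          rw [h]; exact signId true (Lob X Y (L (.inr (σ₂ j)))))

/-- The morphism with components `x³`. -/
def mor3 (hLM : IsLabelledMarking α β γ σ₁ τ₁ σ₂ τ₂ X Y M L) (f : X ⟶ Y) :
    tup γ τ₂ (L2 X Y L) ⟶ endT γ τ₂ M L X Y :=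
  fun j => toSignHom
    (show SignHom (γ j) (Lob X Y (L (.inr (τ₂ j))))
        (if M (.inr (.inr j)) = 1 then (bif γ j then Y else X)
          else Lob X Y (L (.inr (τ₂ j)))) from by
      by_cases hM : M (.inr (.inr j)) = 1
      · simp only [if_pos hM]
        cases hγ : γ j
        · have hL : L (.inr (τ₂ j)) = true :=
            hLM.out_label _ _ hM (by simp [cgOut, hγ])
          rw [hL]; exact f
        · have hL : L (.inr (τ₂ j)) = false :=
            hLM.in_label _ _ hM (by simp [cgIn, hγ])
          rw [hL]; exact f
      · simp only [if_neg hM]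
        exact signId (γ j) (Lob X Y (L (.inr (τ₂ j)))))

variable {F₁ : PowCat B α ⥤ C} {F₂ : PowCat B β ⥤ C} {F₃ : PowCat B γ ⥤ C}

/-- The morphism `⟨M, L, f⟩` of `C` associated to a labelled marking. -/
def interp (φ : Transf α β F₁ F₂ σ₁ τ₁) (ψ : Transf β γ F₂ F₃ σ₂ τ₂)
    (M : CGP wa wb wc → ℕ) (L : CGT n m → Bool)
    (hLM : IsLabelledMarking α β γ σ₁ τ₁ σ₂ τ₂ X Y M L) (f : X ⟶ Y) :
    F₁.obj (startT α σ₁ M L X Y) ⟶ F₃.obj (endT γ τ₂ M L X Y) :=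
  F₁.map (mor1 α β γ σ₁ τ₁ σ₂ τ₂ hLM f) ≫ φ (L1 X Y L) ≫
    F₂.map (mor2 α β γ σ₁ τ₁ σ₂ τ₂ hLM f) ≫ ψ (L2 X Y L) ≫
    F₃.map (mor3 α β γ σ₁ τ₁ σ₂ τ₂ hLM f)

end LabelledMarkings

/-! ### Generic hom gadget -/

section Ghom

variable {B : Type u} [Category.{v} B] {X Y : B}

/-- Condition for a generic hom: `mk = true` means "an `f`", `mk = false` means identity. -/
def GCond (X Y : B) : Bool → Bool → B → B → Prop
  | true, true, P, Q => P = X ∧ Q = Y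
  | false, true, P, Q => P = Y ∧ Q = X
  | _, false, P, Q => P = Q

/-- The generic hom: `f` (suitably oriented) if `mk = true`, an identity otherwise. -/
def ghom (f : X ⟶ Y) : ∀ (s mk : Bool) (P Q : B), GCond X Y s mk P Q → SignHom s P Q
  | true, false, _, _, h => eqToHom h
  | false, false, _, _, h => eqToHom h.symm
  | true, true, _, _, h => eqToHom h.1 ≫ f ≫ eqToHom h.2.symm
  | false, true, _, _, h => eqToHom h.2 ≫ f ≫ eqToHom h.1.symm

/-- `u` is the generic hom with marker `mk`. -/
def IsGhom (f : X ⟶ Y) {s : Bool} {P Q : B} (mk : Bool) (u : toSign s P ⟶ toSign s Q) : Prop :=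
  ∃ h, u = toSignHom (ghom f s mk P Q h)

theorem IsGhom.unique {f : X ⟶ Y} {s : Bool} {P Q : B} {mk : Bool}
    {u v : toSign s P ⟶ toSign s Q} (hu : IsGhom f mk u) (hv : IsGhom f mk v) : u = v := by
  obtain ⟨h₁, rfl⟩ := hu; obtain ⟨h₂, rfl⟩ := hv; rfl

theorem IsGhom.of_mk_eq {f : X ⟶ Y} {s : Bool} {P Q : B} {mk mk' : Bool}
    {u : toSign s P ⟶ toSign s Q} (h : IsGhom f mk u) (e : mk = mk') : IsGhom f mk' u := e ▸ h

theorem toSignHom_comp {s : Bool} {P Q R : B} (u : SignHom s P Q) (v : SignHom s Q R) :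
    (toSignHom u ≫ toSignHom v : toSign s P ⟶ toSign s R)
      = toSignHom (show SignHom s P R from by
          cases s
          · exact v ≫ u
          · exact u ≫ v) := by
  cases s <;> rfl

theorem IsGhom.comp {f : X ⟶ Y} {s : Bool} {P Q R : B} {mk₁ mk₂ : Bool}
    {u : toSign s P ⟶ toSign s Q} {v : toSign s Q ⟶ toSign s R}
    (hu : IsGhom f mk₁ u) (hv : IsGhom f mk₂ v) (hmk : mk₁ = false ∨ mk₂ = false) :
    IsGhom f (mk₁ || mk₂) (u ≫ v) := by
  obtain ⟨h₁, rfl⟩ := hu; obtain ⟨h₂, rfl⟩ := hv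
  rcases hmk with rfl | rfl
  · -- mk₁ = false
    have hPQ : P = Q := by cases s <;> exact h₁
    subst hPQ
    have hu : toSignHom (ghom f s false P P h₁) = 𝟙 (toSign s P) := by cases s <;> rfl
    exact ⟨h₂, by rw [hu, Category.id_comp]; cases s <;> cases mk₂ <;> rfl⟩
  · -- mk₂ = false
    have hQR : Q = R := by cases s <;> exact h₂
    subst hQR
    have hv : toSignHom (ghom f s false Q Q h₂) = 𝟙 (toSign s Q) := by cases s <;> rfl
    exact ⟨by cases mk₁ <;> exact h₁,
      by rw [hv, Category.comp_id]; cases s <;> cases mk₁ <;> rfl⟩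

end Ghom
set_option linter.unusedSectionVars false

section Ghom2

variable {B : Type u} [Category.{v} B] {X Y : B}

theorem toSign_inj : ∀ {s : Bool} {P Q : B}, toSign s P = toSign s Q → P = Q
  | true, _, _, h => h
  | false, _, _, h => congrArg unop h

theorem isGhom_eqToHom (f : X ⟶ Y) {s : Bool} {P Q : B} (e : toSign s P = toSign s Q) :
    IsGhom f false (eqToHom e) := by
  have hPQ : P = Q := toSign_inj e
  subst hPQ
  exact ⟨(by cases s <;> rfl : GCond X Y s false P P), by cases s <;> rfl⟩

theorem isGhom_id (f : X ⟶ Y) {s : Bool} {P : B} : IsGhom f false (𝟙 (toSign s P)) :=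
  ⟨(by cases s <;> rfl : GCond X Y s false P P), by cases s <;> rfl⟩

theorem isGhom_signId (f : X ⟶ Y) {s : Bool} {P : B} :
    IsGhom f false (toSignHom (signId s P)) :=
  ⟨(by cases s <;> rfl : GCond X Y s false P P), by cases s <;> rfl⟩

theorem isGhom_f_cov (f : X ⟶ Y) :
    IsGhom f true (toSignHom (show SignHom true X Y from f)) :=
  ⟨⟨rfl, rfl⟩, by simp [ghom, toSignHom, Lob]; rfl⟩

theorem isGhom_f_con (f : X ⟶ Y) :
    IsGhom f true (toSignHom (show SignHom false Y X from f)) :=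
  ⟨⟨rfl, rfl⟩, by simp [ghom, toSignHom, Lob]; rfl⟩

theorem isGhom_mpr {f : X ⟶ Y} {s : Bool} {P Q P₀ Q₀ : B} (hP : P = P₀) (hQ : Q = Q₀)
    (e : SignHom s P Q = SignHom s P₀ Q₀) (u : SignHom s P₀ Q₀) {mk : Bool}
    (hu : IsGhom f mk (toSignHom u)) : IsGhom f mk (toSignHom (Eq.mpr e u)) := by
  subst hP; subst hQ; exact hu

theorem pi_eqToHom_apply {κ : Type} {α : κ → Bool} {P Q : PowCat B α} (e : P = Q) (j : κ) :
    (eqToHom e : P ⟶ Q) j = eqToHom (congrFun e j) := by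
  subst e; rfl

theorem pi_comp_apply {κ : Type} {α : κ → Bool} {P Q R : PowCat B α}
    (u : P ⟶ Q) (v : Q ⟶ R) (j : κ) : (u ≫ v) j = u j ≫ v j := rfl

theorem isGhom_mor1_aux (f : X ⟶ Y) (b : Bool) (Mv : ℕ) (ℓ : Bool)
    (hin : Mv = 1 → b = false → ℓ = false)
    (hout : Mv = 1 → b = true → ℓ = true) :
    IsGhom f (decide (Mv = 1))
      (toSignHom (show SignHom b (if Mv = 1 then (bif b then X else Y) else Lob X Y ℓ)
          (Lob X Y ℓ) from by
        by_cases hM : Mv = 1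
        · simp only [if_pos hM]
          cases hα : b
          · have hL : ℓ = false := hin hM hα
            rw [hL]; exact f
          · have hL : ℓ = true := hout hM hα
            rw [hL]; exact f
        · simp only [if_neg hM]
          exact signId b (Lob X Y ℓ))) := by
  by_cases hM : Mv = 1
  · rw [decide_eq_true hM]
    cases b
    · have hL : ℓ = false := hin hM rfl
      subst hL; subst hM
      exact ⟨⟨rfl, rfl⟩, by simp [ghom, toSignHom, Lob]; exact (Category.comp_id _).symm⟩
    · have hL : ℓ = true := hout hM rfl
      subst hL; subst hM
      exact ⟨⟨rfl, rfl⟩, by simp [ghom, toSignHom, Lob]; exact (Category.comp_id _).symm⟩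
  · rw [decide_eq_false hM]
    rw [dif_neg hM]
    exact isGhom_mpr (if_neg hM) rfl _ _ (isGhom_signId f)

theorem isGhom_mor2_aux (f : X ⟶ Y) (b : Bool) (Mv : ℕ) (ℓ₁ ℓ₂ : Bool)
    (h1f : Mv = 1 → b = false → ℓ₂ = false) (h2f : Mv = 1 → b = false → ℓ₁ = true)
    (h1t : Mv = 1 → b = true → ℓ₁ = false) (h2t : Mv = 1 → b = true → ℓ₂ = true)
    (hle : Mv ≤ 1)
    (hqf : Mv = 0 → b = false → ℓ₂ = ℓ₁) (hqt : Mv = 0 → b = true → ℓ₁ = ℓ₂) :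
    IsGhom f (decide (Mv = 1))
      (toSignHom (show SignHom b (Lob X Y ℓ₁) (Lob X Y ℓ₂) from by
        by_cases hM : Mv = 1
        · cases hα : b
          · have h1 : ℓ₂ = false := h1f hM hα
            have h2 : ℓ₁ = true := h2f hM hα
            rw [h1, h2]; exact f
          · have h1 : ℓ₁ = false := h1t hM hα
            have h2 : ℓ₂ = true := h2t hM hα
            rw [h1, h2]; exact f
        · have hM0 : Mv = 0 := by omega
          cases hα : b
          · have h : ℓ₂ = ℓ₁ := hqf hM0 hα
            rw [h]; exact signId false (Lob X Y ℓ₁)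
          · have h : ℓ₁ = ℓ₂ := hqt hM0 hα
            rw [h]; exact signId true (Lob X Y ℓ₂))) := by
  by_cases hM : Mv = 1
  · rw [decide_eq_true hM]
    rw [dif_pos hM]
    cases b
    · have h1 : ℓ₂ = false := h1f hM rfl
      have h2 : ℓ₁ = true := h2f hM rfl
      subst h1; subst h2
      exact ⟨⟨rfl, rfl⟩, by simp [ghom, toSignHom, Lob]; exact (by simp : f.op = 𝟙 _ ≫ f.op ≫ 𝟙 _)⟩
    · have h1 : ℓ₁ = false := h1t hM rfl
      have h2 : ℓ₂ = true := h2t hM rfl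
      subst h1; subst h2
      exact ⟨⟨rfl, rfl⟩, by simp [ghom, toSignHom, Lob]; exact (by simp : f = 𝟙 _ ≫ f ≫ 𝟙 _)⟩
  · rw [decide_eq_false hM]
    rw [dif_neg hM]
    have hM0 : Mv = 0 := by omega
    cases b
    · have h : ℓ₂ = ℓ₁ := hqf hM0 rfl
      subst h
      exact isGhom_mpr rfl rfl _ _ (isGhom_signId f)
    · have h : ℓ₁ = ℓ₂ := hqt hM0 rfl
      subst h
      exact isGhom_mpr rfl rfl _ _ (isGhom_signId f)

theorem isGhom_mor3_aux (f : X ⟶ Y) (b : Bool) (Mv : ℕ) (ℓ : Bool)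
    (hout : Mv = 1 → b = false → ℓ = true)
    (hin : Mv = 1 → b = true → ℓ = false) :
    IsGhom f (decide (Mv = 1))
      (toSignHom (show SignHom b (Lob X Y ℓ)
          (if Mv = 1 then (bif b then Y else X) else Lob X Y ℓ) from by
        by_cases hM : Mv = 1
        · simp only [if_pos hM]
          cases hα : b
          · have hL : ℓ = true := hout hM hα
            rw [hL]; exact f
          · have hL : ℓ = false := hin hM hα
            rw [hL]; exact f
        · simp only [if_neg hM]
          exact signId b (Lob X Y ℓ))) := by
  by_cases hM : Mv = 1
  · rw [decide_eq_true hM]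
    cases b
    · have hL : ℓ = true := hout hM rfl
      subst hL; subst hM
      exact ⟨⟨rfl, rfl⟩, by simp [ghom, toSignHom, Lob]; exact (Category.id_comp _).symm⟩
    · have hL : ℓ = false := hin hM rfl
      subst hL; subst hM
      exact ⟨⟨rfl, rfl⟩, by simp [ghom, toSignHom, Lob]; exact (Category.id_comp _).symm⟩
  · rw [decide_eq_false hM]
    rw [dif_neg hM]
    exact isGhom_mpr rfl (if_neg hM) _ _ (isGhom_signId f)

/-- hexagon leg `e₁ = (X,Y)`, `e₂ = const Y`, i.e. `g = 𝟙 Y`, `h = f`. -/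
theorem isGhom_hex_XY_Y (f : X ⟶ Y) (p : Prop) [Decidable p] (b : Bool) (P : B) :
    IsGhom f (decide p && b)
      (toSignHom
        (show SignHom b (if p then (fun s => bif s then X else Y) b else P)
            (if p then (fun _ : Bool => Y) b else P) from
          if hj : p then by simp only [if_pos hj]; exact mvHom (e₁ := fun s => bif s then X else Y) (e₂ := fun _ => Y) (𝟙 Y) f b
          else by simp only [if_neg hj]; exact signId b P)) := by
  by_cases hj : p
  · rw [decide_eq_true hj, dif_pos hj]
    cases b
    · exact isGhom_mpr (if_pos hj) (if_pos hj) _ _ (isGhom_signId f)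
    · exact isGhom_mpr (if_pos hj) (if_pos hj) _ _ (isGhom_f_cov f)
  · rw [decide_eq_false hj, dif_neg hj]
    exact isGhom_mpr (if_neg hj) (if_neg hj) _ _ (isGhom_signId f)

/-- hexagon leg `e₁ = (X,Y)`, `e₂ = const X`, i.e. `g = f`, `h = 𝟙 X`. -/
theorem isGhom_hex_XY_X (f : X ⟶ Y) (p : Prop) [Decidable p] (b : Bool) (P : B) :
    IsGhom f (decide p && !b)
      (toSignHom
        (show SignHom b (if p then (fun s => bif s then X else Y) b else P)
            (if p then (fun _ : Bool => X) b else P) from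
          if hj : p then by simp only [if_pos hj]; exact mvHom (e₁ := fun s => bif s then X else Y) (e₂ := fun _ => X) f (𝟙 X) b
          else by simp only [if_neg hj]; exact signId b P)) := by
  by_cases hj : p
  · rw [decide_eq_true hj, dif_pos hj]
    cases b
    · exact isGhom_mpr (if_pos hj) (if_pos hj) _ _ (isGhom_f_con f)
    · exact isGhom_mpr (if_pos hj) (if_pos hj) _ _ (isGhom_signId f)
  · rw [decide_eq_false hj, dif_neg hj]
    exact isGhom_mpr (if_neg hj) (if_neg hj) _ _ (isGhom_signId f)

/-- hexagon leg `e₁ = const Y`, `e₂ = (Y,X)`, i.e. `g = f`, `h = 𝟙 Y`. -/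
theorem isGhom_hex_Y_YX (f : X ⟶ Y) (p : Prop) [Decidable p] (b : Bool) (P : B) :
    IsGhom f (decide p && !b)
      (toSignHom
        (show SignHom b (if p then (fun _ : Bool => Y) b else P)
            (if p then (fun s => bif s then Y else X) b else P) from
          if hj : p then by simp only [if_pos hj]; exact mvHom (e₁ := fun _ => Y) (e₂ := fun s => bif s then Y else X) f (𝟙 Y) b
          else by simp only [if_neg hj]; exact signId b P)) := by
  by_cases hj : p
  · rw [decide_eq_true hj, dif_pos hj]
    cases b
    · exact isGhom_mpr (if_pos hj) (if_pos hj) _ _ (isGhom_f_con f)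
    · exact isGhom_mpr (if_pos hj) (if_pos hj) _ _ (isGhom_signId f)
  · rw [decide_eq_false hj, dif_neg hj]
    exact isGhom_mpr (if_neg hj) (if_neg hj) _ _ (isGhom_signId f)

/-- hexagon leg `e₁ = const X`, `e₂ = (Y,X)`, i.e. `g = 𝟙 X`, `h = f`. -/
theorem isGhom_hex_X_YX (f : X ⟶ Y) (p : Prop) [Decidable p] (b : Bool) (P : B) :
    IsGhom f (decide p && b)
      (toSignHom
        (show SignHom b (if p then (fun _ : Bool => X) b else P)
            (if p then (fun s => bif s then Y else X) b else P) from
          if hj : p then by simp only [if_pos hj]; exact mvHom (e₁ := fun _ => X) (e₂ := fun s => bif s then Y else X) (𝟙 X) f b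
          else by simp only [if_neg hj]; exact signId b P)) := by
  by_cases hj : p
  · rw [decide_eq_true hj, dif_pos hj]
    cases b
    · exact isGhom_mpr (if_pos hj) (if_pos hj) _ _ (isGhom_signId f)
    · exact isGhom_mpr (if_pos hj) (if_pos hj) _ _ (isGhom_f_cov f)
  · rw [decide_eq_false hj, dif_neg hj]
    exact isGhom_mpr (if_neg hj) (if_neg hj) _ _ (isGhom_signId f)

end Ghom2

section MorChar

variable {B : Type u} [Category.{v} B] {C : Type u'} [Category.{v'} C]
  {wa wb wc n m : ℕ}
  {α : Fin wa → Bool} {β : Fin wb → Bool} {γ : Fin wc → Bool}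
  {σ₁ : Fin wa → Fin n} {τ₁ : Fin wb → Fin n}
  {σ₂ : Fin wb → Fin m} {τ₂ : Fin wc → Fin m}
  {X Y : B} {M : CGP wa wb wc → ℕ} {L : CGT n m → Bool}

theorem isGhom_mor1 (hLM : IsLabelledMarking α β γ σ₁ τ₁ σ₂ τ₂ X Y M L) (f : X ⟶ Y)
    (j : Fin wa) :
    IsGhom f (decide (M (.inl j) = 1)) (mor1 α β γ σ₁ τ₁ σ₂ τ₂ hLM f j) :=
  isGhom_mor1_aux f (α j) (M (.inl j)) (L (.inl (σ₁ j)))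
    (fun hM hα => hLM.in_label _ _ hM (by simp [cgIn, hα]))
    (fun hM hα => hLM.out_label _ _ hM (by simp [cgOut, hα]))

theorem isGhom_mor2 (hLM : IsLabelledMarking α β γ σ₁ τ₁ σ₂ τ₂ X Y M L) (f : X ⟶ Y)
    (j : Fin wb) :
    IsGhom f (decide (M (.inr (.inl j)) = 1)) (mor2 α β γ σ₁ τ₁ σ₂ τ₂ hLM f j) :=
  isGhom_mor2_aux f (β j) (M (.inr (.inl j))) (L (.inl (τ₁ j))) (L (.inr (σ₂ j)))
    (fun hM hβ => hLM.in_label _ _ hM (by simp [cgIn, hβ]))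
    (fun hM hβ => hLM.out_label _ _ hM (by simp [cgOut, hβ]))
    (fun hM hβ => hLM.in_label _ _ hM (by simp [cgIn, hβ]))
    (fun hM hβ => hLM.out_label _ _ hM (by simp [cgOut, hβ]))
    (hLM.le_one _)
    (fun hM hβ => hLM.eq_label _ _ _ hM (by simp [cgIn, hβ]) (by simp [cgOut, hβ]))
    (fun hM hβ => hLM.eq_label _ _ _ hM (by simp [cgIn, hβ]) (by simp [cgOut, hβ]))

theorem isGhom_mor3 (hLM : IsLabelledMarking α β γ σ₁ τ₁ σ₂ τ₂ X Y M L) (f : X ⟶ Y)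
    (j : Fin wc) :
    IsGhom f (decide (M (.inr (.inr j)) = 1)) (mor3 α β γ σ₁ τ₁ σ₂ τ₂ hLM f j) :=
  isGhom_mor3_aux f (γ j) (M (.inr (.inr j))) (L (.inr (τ₂ j)))
    (fun hM hγ => hLM.out_label _ _ hM (by simp [cgOut, hγ]))
    (fun hM hγ => hLM.in_label _ _ hM (by simp [cgIn, hγ]))

variable {ι : Type} [DecidableEq ι]

theorem isGhom_tupMVHom_XY_Y {κ : Type} (αx : κ → Bool) (σ : κ → ι) (A : ι → B) (i : ι)
    (f : X ⟶ Y) (j : κ) :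
    IsGhom f (decide (σ j = i) && αx j)
      (tupMVHom αx σ A i (fun s => bif s then X else Y) (fun _ => Y) (𝟙 Y) f j) :=
  isGhom_hex_XY_Y f (σ j = i) (αx j) (A (σ j))

theorem isGhom_tupMVHom_XY_X {κ : Type} (αx : κ → Bool) (σ : κ → ι) (A : ι → B) (i : ι)
    (f : X ⟶ Y) (j : κ) :
    IsGhom f (decide (σ j = i) && !(αx j))
      (tupMVHom αx σ A i (fun s => bif s then X else Y) (fun _ => X) f (𝟙 X) j) :=
  isGhom_hex_XY_X f (σ j = i) (αx j) (A (σ j))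

theorem isGhom_tupMVHom_Y_YX {κ : Type} (αx : κ → Bool) (σ : κ → ι) (A : ι → B) (i : ι)
    (f : X ⟶ Y) (j : κ) :
    IsGhom f (decide (σ j = i) && !(αx j))
      (tupMVHom αx σ A i (fun _ => Y) (fun s => bif s then Y else X) f (𝟙 Y) j) :=
  isGhom_hex_Y_YX f (σ j = i) (αx j) (A (σ j))

theorem isGhom_tupMVHom_X_YX {κ : Type} (αx : κ → Bool) (σ : κ → ι) (A : ι → B) (i : ι)
    (f : X ⟶ Y) (j : κ) :
    IsGhom f (decide (σ j = i) && αx j)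
      (tupMVHom αx σ A i (fun _ => X) (fun s => bif s then Y else X) (𝟙 X) f j) :=
  isGhom_hex_X_YX f (σ j = i) (αx j) (A (σ j))

end MorChar
section CGFacts

variable {B : Type u} [Category.{v} B]
  {wa wb wc n m : ℕ}
  {α : Fin wa → Bool} {β : Fin wb → Bool} {γ : Fin wc → Bool}
  {σ₁ : Fin wa → Fin n} {τ₁ : Fin wb → Fin n}
  {σ₂ : Fin wb → Fin m} {τ₂ : Fin wc → Fin m}
  {X Y : B} {M : CGP wa wb wc → ℕ} {L : CGT n m → Bool}

theorem cgFire_inl_left (t₀ : Fin n) (j : Fin wa) :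
    cgFire α β γ σ₁ τ₁ σ₂ τ₂ M (.inl t₀) (.inl j)
      = if σ₁ j = t₀ then (bif α j then M (.inl j) - 1 else M (.inl j) + 1)
        else M (.inl j) := by
  unfold cgFire
  cases hα : α j <;> by_cases hσ : σ₁ j = t₀ <;> simp [cgIn, cgOut, hα, hσ]

theorem cgFire_inl_mid (t₀ : Fin n) (j : Fin wb) :
    cgFire α β γ σ₁ τ₁ σ₂ τ₂ M (.inl t₀) (.inr (.inl j))
      = if τ₁ j = t₀ then (bif β j then M (.inr (.inl j)) + 1 else M (.inr (.inl j)) - 1)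
        else M (.inr (.inl j)) := by
  unfold cgFire
  cases hβ : β j <;> by_cases hτ : τ₁ j = t₀ <;> simp [cgIn, cgOut, hβ, hτ]

theorem cgFire_inl_right (t₀ : Fin n) (j : Fin wc) :
    cgFire α β γ σ₁ τ₁ σ₂ τ₂ M (.inl t₀) (.inr (.inr j)) = M (.inr (.inr j)) := by
  unfold cgFire
  cases hγ : γ j <;> simp [cgIn, cgOut, hγ]

theorem cgFire_inr_left (t₁ : Fin m) (j : Fin wa) :
    cgFire α β γ σ₁ τ₁ σ₂ τ₂ M (.inr t₁) (.inl j) = M (.inl j) := by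
  unfold cgFire
  cases hα : α j <;> simp [cgIn, cgOut, hα]

theorem cgFire_inr_mid (t₁ : Fin m) (j : Fin wb) :
    cgFire α β γ σ₁ τ₁ σ₂ τ₂ M (.inr t₁) (.inr (.inl j))
      = if σ₂ j = t₁ then (bif β j then M (.inr (.inl j)) - 1 else M (.inr (.inl j)) + 1)
        else M (.inr (.inl j)) := by
  unfold cgFire
  cases hβ : β j <;> by_cases hσ : σ₂ j = t₁ <;> simp [cgIn, cgOut, hβ, hσ]

theorem cgFire_inr_right (t₁ : Fin m) (j : Fin wc) :
    cgFire α β γ σ₁ τ₁ σ₂ τ₂ M (.inr t₁) (.inr (.inr j))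
      = if τ₂ j = t₁ then (bif γ j then M (.inr (.inr j)) + 1 else M (.inr (.inr j)) - 1)
        else M (.inr (.inr j)) := by
  unfold cgFire
  cases hγ : γ j <;> by_cases hτ : τ₂ j = t₁ <;> simp [cgIn, cgOut, hγ, hτ]

section InlFacts

variable (hLM : IsLabelledMarking α β γ σ₁ τ₁ σ₂ τ₂ X Y M L) {t₀ : Fin n}
  (hen : cgEnabled α β γ σ₁ τ₁ σ₂ τ₂ M (.inl t₀))
  (hLt : L (.inl t₀) = true)

include hLM hen hLt

theorem inl_fact_cov {j : Fin wa} (hσ : σ₁ j = t₀) (hα : α j = true) : M (.inl j) = 1 := by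
  have h1 := hen (.inl j) (by simp [cgOut, hα, hσ])
  have h2 := hLM.le_one (.inl j)
  omega

theorem inl_fact_con {j : Fin wa} (hσ : σ₁ j = t₀) (hα : α j = false) : M (.inl j) = 0 := by
  have h2 := hLM.le_one (.inl j)
  by_contra h
  have hM : M (.inl j) = 1 := by omega
  have := hLM.in_label (.inl j) (.inl t₀) hM (by simp [cgIn, hα, hσ])
  rw [hLt] at this; exact Bool.noConfusion this

theorem inl_fact_mid_con {j : Fin wb} (hτ : τ₁ j = t₀) (hβ : β j = false) :
    M (.inr (.inl j)) = 1 := by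
  have h1 := hen (.inr (.inl j)) (by simp [cgOut, hβ, hτ])
  have h2 := hLM.le_one (.inr (.inl j))
  omega

theorem inl_fact_mid_cov {j : Fin wb} (hτ : τ₁ j = t₀) (hβ : β j = true) :
    M (.inr (.inl j)) = 0 := by
  have h2 := hLM.le_one (.inr (.inl j))
  by_contra h
  have hM : M (.inr (.inl j)) = 1 := by omega
  have := hLM.in_label (.inr (.inl j)) (.inl t₀) hM (by simp [cgIn, hβ, hτ])
  rw [hLt] at this; exact Bool.noConfusion this

end InlFacts

section InrFacts

variable (hLM : IsLabelledMarking α β γ σ₁ τ₁ σ₂ τ₂ X Y M L) {t₁ : Fin m}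
  (hen : cgEnabled α β γ σ₁ τ₁ σ₂ τ₂ M (.inr t₁))
  (hLt : L (.inr t₁) = true)

include hLM hen hLt

theorem inr_fact_cov {j : Fin wc} (hτ : τ₂ j = t₁) (hγ : γ j = false) :
    M (.inr (.inr j)) = 1 := by
  have h1 := hen (.inr (.inr j)) (by simp [cgOut, hγ, hτ])
  have h2 := hLM.le_one (.inr (.inr j))
  omega

theorem inr_fact_con {j : Fin wc} (hτ : τ₂ j = t₁) (hγ : γ j = true) :
    M (.inr (.inr j)) = 0 := by
  have h2 := hLM.le_one (.inr (.inr j))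
  by_contra h
  have hM : M (.inr (.inr j)) = 1 := by omega
  have := hLM.in_label (.inr (.inr j)) (.inr t₁) hM (by simp [cgIn, hγ, hτ])
  rw [hLt] at this; exact Bool.noConfusion this

theorem inr_fact_mid_cov {j : Fin wb} (hσ : σ₂ j = t₁) (hβ : β j = true) :
    M (.inr (.inl j)) = 1 := by
  have h1 := hen (.inr (.inl j)) (by simp [cgOut, hβ, hσ])
  have h2 := hLM.le_one (.inr (.inl j))
  omega

theorem inr_fact_mid_con {j : Fin wb} (hσ : σ₂ j = t₁) (hβ : β j = false) :
    M (.inr (.inl j)) = 0 := by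
  have h2 := hLM.le_one (.inr (.inl j))
  by_contra h
  have hM : M (.inr (.inl j)) = 1 := by omega
  have := hLM.in_label (.inr (.inl j)) (.inr t₁) hM (by simp [cgIn, hβ, hσ])
  rw [hLt] at this; exact Bool.noConfusion this

end InrFacts

end CGFacts
section Preserve

variable {B : Type u} [Category.{v} B]
  {wa wb wc n m : ℕ}
  {α : Fin wa → Bool} {β : Fin wb → Bool} {γ : Fin wc → Bool}
  {σ₁ : Fin wa → Fin n} {τ₁ : Fin wb → Fin n}
  {σ₂ : Fin wb → Fin m} {τ₂ : Fin wc → Fin m}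
  {X Y : B} {M : CGP wa wb wc → ℕ} {L : CGT n m → Bool}

theorem isLM_fire_inl (hLM : IsLabelledMarking α β γ σ₁ τ₁ σ₂ τ₂ X Y M L) {t₀ : Fin n}
    (hen : cgEnabled α β γ σ₁ τ₁ σ₂ τ₂ M (.inl t₀)) (hLt : L (.inl t₀) = true) :
    IsLabelledMarking α β γ σ₁ τ₁ σ₂ τ₂ X Y (cgFire α β γ σ₁ τ₁ σ₂ τ₂ M (.inl t₀))
      (fun s => if s = .inl t₀ then false else L s) where
  le_one := by
    intro p
    rcases p with j | j | j
    · rw [cgFire_inl_left t₀ j]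
      by_cases hσ : σ₁ j = t₀
      · cases hα : α j
        · have := inl_fact_con hLM hen hLt hσ hα
          simp [hσ, hα]; omega
        · have := hLM.le_one (.inl j)
          simp [hσ, hα]; omega
      · simp [hσ]; exact hLM.le_one _
    · rw [cgFire_inl_mid t₀ j]
      by_cases hτ : τ₁ j = t₀
      · cases hβ : β j
        · have := hLM.le_one (.inr (.inl j))
          simp [hτ, hβ]; omega
        · have := inl_fact_mid_cov hLM hen hLt hτ hβ
          simp [hτ, hβ]; omega
      · simp [hτ]; exact hLM.le_one _
    · rw [cgFire_inl_right t₀ j]; exact hLM.le_one _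
  in_label := by
    intro p t hM' hin
    by_cases ht : t = .inl t₀
    · simp [ht]
    rw [if_neg ht]
    rcases p with j | j | j
    · rw [cgFire_inl_left t₀ j] at hM'
      cases hα : α j
      · simp [cgIn, hα] at hin
        subst hin
        have hσ : σ₁ j ≠ t₀ := fun h => ht (congrArg Sum.inl h)
        rw [if_neg hσ] at hM'
        exact hLM.in_label _ _ hM' (by simp [cgIn, hα])
      · simp [cgIn, hα] at hin
    · rw [cgFire_inl_mid t₀ j] at hM'
      cases hβ : β j
      · simp [cgIn, hβ] at hin
        subst hin
        by_cases hτ : τ₁ j = t₀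
        · have h1 := inl_fact_mid_con hLM hen hLt hτ hβ
          rw [if_pos hτ, hβ] at hM'
          simp [h1] at hM'
        · rw [if_neg hτ] at hM'
          exact hLM.in_label _ _ hM' (by simp [cgIn, hβ])
      · simp [cgIn, hβ] at hin
        subst hin
        have hτ : τ₁ j ≠ t₀ := fun h => ht (congrArg Sum.inl h)
        rw [if_neg hτ] at hM'
        exact hLM.in_label _ _ hM' (by simp [cgIn, hβ])
    · rw [cgFire_inl_right t₀ j] at hM'
      cases hγ : γ j
      · simp [cgIn, hγ] at hin
      · simp [cgIn, hγ] at hin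
        subst hin
        exact hLM.in_label _ _ hM' (by simp [cgIn, hγ])
  out_label := by
    intro p t hM' hout
    by_cases ht : t = .inl t₀
    · subst ht
      rcases p with j | j | j
      · cases hα : α j
        · simp [cgOut, hα] at hout
        · simp [cgOut, hα] at hout
          rw [cgFire_inl_left t₀ j] at hM'
          have h1 := inl_fact_cov hLM hen hLt hout hα
          rw [if_pos hout, hα, h1] at hM'
          simp at hM'
      · cases hβ : β j
        · simp [cgOut, hβ] at hout
          rw [cgFire_inl_mid t₀ j] at hM'
          have h1 := inl_fact_mid_con hLM hen hLt hout hβ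
          rw [if_pos hout, hβ, h1] at hM'
          simp at hM'
        · simp [cgOut, hβ] at hout
      · cases hγ : γ j
        · simp [cgOut, hγ] at hout
        · simp [cgOut, hγ] at hout
    · rw [if_neg ht]
      rcases p with j | j | j
      · cases hα : α j
        · simp [cgOut, hα] at hout
        · simp [cgOut, hα] at hout
          subst hout
          have hσ : σ₁ j ≠ t₀ := fun h => ht (congrArg Sum.inl h)
          rw [cgFire_inl_left t₀ j, if_neg hσ] at hM'
          exact hLM.out_label _ _ hM' (by simp [cgOut, hα])
      · cases hβ : β j
        · simp [cgOut, hβ] at hout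
          subst hout
          have hτ : τ₁ j ≠ t₀ := fun h => ht (congrArg Sum.inl h)
          rw [cgFire_inl_mid t₀ j, if_neg hτ] at hM'
          exact hLM.out_label _ _ hM' (by simp [cgOut, hβ])
        · simp [cgOut, hβ] at hout
          subst hout
          by_cases hτ : τ₁ j = t₀
          · have h0 := inl_fact_mid_cov hLM hen hLt hτ hβ
            have heq := hLM.eq_label (.inr (.inl j)) (.inl (τ₁ j)) (.inr (σ₂ j)) h0
              (by simp [cgIn, hβ]) (by simp [cgOut, hβ])
            rw [← heq, hτ, hLt]
          · rw [cgFire_inl_mid t₀ j, if_neg hτ] at hM'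
            exact hLM.out_label _ _ hM' (by simp [cgOut, hβ])
      · cases hγ : γ j
        · simp [cgOut, hγ] at hout
          subst hout
          rw [cgFire_inl_right t₀ j] at hM'
          exact hLM.out_label _ _ hM' (by simp [cgOut, hγ])
        · simp [cgOut, hγ] at hout
  eq_label := by
    intro p t t' hM' hin hout
    rcases p with j | j | j
    · cases hα : α j
      · simp [cgOut, hα] at hout
      · simp [cgIn, hα] at hin
    · rw [cgFire_inl_mid t₀ j] at hM'
      cases hβ : β j
      · -- in = inr (σ₂ j), out = inl (τ₁ j)
        simp [cgIn, hβ] at hin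
        simp [cgOut, hβ] at hout
        subst hin; subst hout
        by_cases hτ : τ₁ j = t₀
        · have h1 := inl_fact_mid_con hLM hen hLt hτ hβ
          have hL2 := hLM.in_label (.inr (.inl j)) (.inr (σ₂ j)) h1 (by simp [cgIn, hβ])
          rw [if_neg (by simp : (Sum.inr (σ₂ j) : CGT n m) ≠ .inl t₀), hL2,
            if_pos (congrArg Sum.inl hτ)]
        · rw [if_neg hτ] at hM'
          have := hLM.eq_label (.inr (.inl j)) (.inr (σ₂ j)) (.inl (τ₁ j)) hM'
            (by simp [cgIn, hβ]) (by simp [cgOut, hβ])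
          have hτ' : (Sum.inl (τ₁ j) : CGT n m) ≠ .inl t₀ := fun h => hτ (by injection h)
          rw [if_neg (by simp : (Sum.inr (σ₂ j) : CGT n m) ≠ .inl t₀), if_neg hτ', this]
      · -- in = inl (τ₁ j), out = inr (σ₂ j)
        simp [cgIn, hβ] at hin
        simp [cgOut, hβ] at hout
        subst hin; subst hout
        by_cases hτ : τ₁ j = t₀
        · rw [if_pos hτ, hβ] at hM'
          simp at hM'
        · rw [if_neg hτ] at hM'
          have := hLM.eq_label (.inr (.inl j)) (.inl (τ₁ j)) (.inr (σ₂ j)) hM'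
            (by simp [cgIn, hβ]) (by simp [cgOut, hβ])
          have hτ' : (Sum.inl (τ₁ j) : CGT n m) ≠ .inl t₀ := fun h => hτ (by injection h)
          rw [if_neg hτ', if_neg (by simp : (Sum.inr (σ₂ j) : CGT n m) ≠ .inl t₀), this]
    · cases hγ : γ j
      · simp [cgIn, hγ] at hin
      · simp [cgOut, hγ] at hout

end Preserve
section Preserve2

variable {B : Type u} [Category.{v} B]
  {wa wb wc n m : ℕ}
  {α : Fin wa → Bool} {β : Fin wb → Bool} {γ : Fin wc → Bool}
  {σ₁ : Fin wa → Fin n} {τ₁ : Fin wb → Fin n}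
  {σ₂ : Fin wb → Fin m} {τ₂ : Fin wc → Fin m}
  {X Y : B} {M : CGP wa wb wc → ℕ} {L : CGT n m → Bool}

theorem isLM_fire_inr (hLM : IsLabelledMarking α β γ σ₁ τ₁ σ₂ τ₂ X Y M L) {t₁ : Fin m}
    (hen : cgEnabled α β γ σ₁ τ₁ σ₂ τ₂ M (.inr t₁)) (hLt : L (.inr t₁) = true) :
    IsLabelledMarking α β γ σ₁ τ₁ σ₂ τ₂ X Y (cgFire α β γ σ₁ τ₁ σ₂ τ₂ M (.inr t₁))
      (fun s => if s = .inr t₁ then false else L s) where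
  le_one := by
    intro p
    rcases p with j | j | j
    · rw [cgFire_inr_left t₁ j]; exact hLM.le_one _
    · rw [cgFire_inr_mid t₁ j]
      by_cases hσ : σ₂ j = t₁
      · cases hβ : β j
        · have := inr_fact_mid_con hLM hen hLt hσ hβ
          simp [hσ, hβ]; omega
        · have := hLM.le_one (.inr (.inl j))
          simp [hσ, hβ]; omega
      · simp [hσ]; exact hLM.le_one _
    · rw [cgFire_inr_right t₁ j]
      by_cases hτ : τ₂ j = t₁
      · cases hγ : γ j
        · have := hLM.le_one (.inr (.inr j))
          simp [hτ, hγ]; omega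
        · have := inr_fact_con hLM hen hLt hτ hγ
          simp [hτ, hγ]; omega
      · simp [hτ]; exact hLM.le_one _
  in_label := by
    intro p t hM' hin
    by_cases ht : t = .inr t₁
    · simp [ht]
    rw [if_neg ht]
    rcases p with j | j | j
    · rw [cgFire_inr_left t₁ j] at hM'
      cases hα : α j
      · simp [cgIn, hα] at hin
        subst hin
        exact hLM.in_label _ _ hM' (by simp [cgIn, hα])
      · simp [cgIn, hα] at hin
    · rw [cgFire_inr_mid t₁ j] at hM'
      cases hβ : β j
      · simp [cgIn, hβ] at hin
        subst hin
        have hσ : σ₂ j ≠ t₁ := fun h => ht (congrArg Sum.inr h)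
        rw [if_neg hσ] at hM'
        exact hLM.in_label _ _ hM' (by simp [cgIn, hβ])
      · simp [cgIn, hβ] at hin
        subst hin
        by_cases hσ : σ₂ j = t₁
        · have h1 := inr_fact_mid_cov hLM hen hLt hσ hβ
          rw [if_pos hσ, hβ, h1] at hM'
          simp at hM'
        · rw [if_neg hσ] at hM'
          exact hLM.in_label _ _ hM' (by simp [cgIn, hβ])
    · rw [cgFire_inr_right t₁ j] at hM'
      cases hγ : γ j
      · simp [cgIn, hγ] at hin
      · simp [cgIn, hγ] at hin
        subst hin
        have hτ : τ₂ j ≠ t₁ := fun h => ht (congrArg Sum.inr h)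
        rw [if_neg hτ] at hM'
        exact hLM.in_label _ _ hM' (by simp [cgIn, hγ])
  out_label := by
    intro p t hM' hout
    by_cases ht : t = .inr t₁
    · subst ht
      rcases p with j | j | j
      · cases hα : α j
        · simp [cgOut, hα] at hout
        · simp [cgOut, hα] at hout
      · cases hβ : β j
        · simp [cgOut, hβ] at hout
        · simp [cgOut, hβ] at hout
          rw [cgFire_inr_mid t₁ j] at hM'
          have h1 := inr_fact_mid_cov hLM hen hLt hout hβ
          rw [if_pos hout, hβ, h1] at hM'
          simp at hM'
      · cases hγ : γ j
        · simp [cgOut, hγ] at hout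
          rw [cgFire_inr_right t₁ j] at hM'
          have h1 := inr_fact_cov hLM hen hLt hout hγ
          rw [if_pos hout, hγ, h1] at hM'
          simp at hM'
        · simp [cgOut, hγ] at hout
    · rw [if_neg ht]
      rcases p with j | j | j
      · cases hα : α j
        · simp [cgOut, hα] at hout
        · simp [cgOut, hα] at hout
          subst hout
          rw [cgFire_inr_left t₁ j] at hM'
          exact hLM.out_label _ _ hM' (by simp [cgOut, hα])
      · cases hβ : β j
        · simp [cgOut, hβ] at hout
          subst hout
          by_cases hσ : σ₂ j = t₁
          · have h0 := inr_fact_mid_con hLM hen hLt hσ hβ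
            have heq := hLM.eq_label (.inr (.inl j)) (.inr (σ₂ j)) (.inl (τ₁ j)) h0
              (by simp [cgIn, hβ]) (by simp [cgOut, hβ])
            rw [← heq, hσ, hLt]
          · rw [cgFire_inr_mid t₁ j, if_neg hσ] at hM'
            exact hLM.out_label _ _ hM' (by simp [cgOut, hβ])
        · simp [cgOut, hβ] at hout
          subst hout
          have hσ : σ₂ j ≠ t₁ := fun h => ht (congrArg Sum.inr h)
          rw [cgFire_inr_mid t₁ j, if_neg hσ] at hM'
          exact hLM.out_label _ _ hM' (by simp [cgOut, hβ])
      · cases hγ : γ j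
        · simp [cgOut, hγ] at hout
          subst hout
          have hτ : τ₂ j ≠ t₁ := fun h => ht (congrArg Sum.inr h)
          rw [cgFire_inr_right t₁ j, if_neg hτ] at hM'
          exact hLM.out_label _ _ hM' (by simp [cgOut, hγ])
        · simp [cgOut, hγ] at hout
  eq_label := by
    intro p t t' hM' hin hout
    rcases p with j | j | j
    · cases hα : α j
      · simp [cgOut, hα] at hout
      · simp [cgIn, hα] at hin
    · rw [cgFire_inr_mid t₁ j] at hM'
      cases hβ : β j
      · -- β false : in = inr (σ₂ j), out = inl (τ₁ j)
        simp [cgIn, hβ] at hin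
        simp [cgOut, hβ] at hout
        subst hin; subst hout
        by_cases hσ : σ₂ j = t₁
        · rw [if_pos hσ, hβ] at hM'
          simp at hM'
        · rw [if_neg hσ] at hM'
          have := hLM.eq_label (.inr (.inl j)) (.inr (σ₂ j)) (.inl (τ₁ j)) hM'
            (by simp [cgIn, hβ]) (by simp [cgOut, hβ])
          have hσ' : (Sum.inr (σ₂ j) : CGT n m) ≠ .inr t₁ := fun h => hσ (by injection h)
          rw [if_neg hσ', if_neg (by simp : (Sum.inl (τ₁ j) : CGT n m) ≠ .inr t₁), this]
      · -- β true : in = inl (τ₁ j), out = inr (σ₂ j)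
        simp [cgIn, hβ] at hin
        simp [cgOut, hβ] at hout
        subst hin; subst hout
        by_cases hσ : σ₂ j = t₁
        · have h1 := inr_fact_mid_cov hLM hen hLt hσ hβ
          have hL1 := hLM.in_label (.inr (.inl j)) (.inl (τ₁ j)) h1 (by simp [cgIn, hβ])
          rw [if_neg (by simp : (Sum.inl (τ₁ j) : CGT n m) ≠ .inr t₁), hL1,
            if_pos (congrArg Sum.inr hσ)]
        · rw [if_neg hσ] at hM'
          have := hLM.eq_label (.inr (.inl j)) (.inl (τ₁ j)) (.inr (σ₂ j)) hM'
            (by simp [cgIn, hβ]) (by simp [cgOut, hβ])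
          have hσ' : (Sum.inr (σ₂ j) : CGT n m) ≠ .inr t₁ := fun h => hσ (by injection h)
          rw [if_neg (by simp : (Sum.inl (τ₁ j) : CGT n m) ≠ .inr t₁), if_neg hσ', this]
    · cases hγ : γ j
      · simp [cgIn, hγ] at hin
      · simp [cgOut, hγ] at hout

end Preserve2
section ObjEq

variable {B : Type u} [Category.{v} B]
  {wa wb wc n m : ℕ}
  {α : Fin wa → Bool} {β : Fin wb → Bool} {γ : Fin wc → Bool}
  {σ₁ : Fin wa → Fin n} {τ₁ : Fin wb → Fin n}
  {σ₂ : Fin wb → Fin m} {τ₂ : Fin wc → Fin m}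
  {X Y : B} {M : CGP wa wb wc → ℕ} {L : CGT n m → Bool}

section InlObj

variable (hLM : IsLabelledMarking α β γ σ₁ τ₁ σ₂ τ₂ X Y M L) {t₀ : Fin n}
  (hen : cgEnabled α β γ σ₁ τ₁ σ₂ τ₂ M (.inl t₀))
  (hLt : L (.inl t₀) = true)

include hLM hen hLt

theorem upd_L1_Y : upd (L1 X Y L) t₀ Y = L1 X Y L := by
  funext k
  by_cases hk : k = t₀
  · subst hk; simp [upd, L1, hLt, Lob]
  · simp [upd, hk]

theorem L1_relabel_inl :
    L1 X Y (fun s : CGT n m => if s = .inl t₀ then false else L s)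
      = upd (L1 X Y L) t₀ X := by
  funext k
  by_cases hk : k = t₀
  · subst hk; simp [upd, L1, Lob]
  · simp [upd, L1, hk, Sum.inl.injEq]

theorem L2_relabel_inl :
    L2 X Y (fun s : CGT n m => if s = .inl t₀ then false else L s) = L2 X Y L := by
  funext k
  simp [L2]

theorem startT_fire_inl :
    startT α σ₁ M L X Y
      = startT α σ₁ (cgFire α β γ σ₁ τ₁ σ₂ τ₂ M (.inl t₀))
          (fun s : CGT n m => if s = .inl t₀ then false else L s) X Y := by
  funext j
  show toSign (α j) _ = toSign (α j) _
  apply congrArg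
  rw [cgFire_inl_left t₀ j]
  by_cases hσ : σ₁ j = t₀
  · cases hα : α j
    · have h0 := inl_fact_con hLM hen hLt hσ hα
      simp [hσ, hα, h0, hLt, Lob]
    · have h1 := inl_fact_cov hLM hen hLt hσ hα
      simp [hσ, hα, h1, Lob]
  · simp [hσ]

theorem endT_fire_inl :
    endT γ τ₂ M L X Y
      = endT γ τ₂ (cgFire α β γ σ₁ τ₁ σ₂ τ₂ M (.inl t₀))
          (fun s : CGT n m => if s = .inl t₀ then false else L s) X Y := by
  funext j
  show toSign (γ j) _ = toSign (γ j) _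
  apply congrArg
  rw [cgFire_inl_right t₀ j]
  simp

theorem gcond_cInl (j : Fin wa) :
    GCond X Y (α j) (decide (M (.inl j) = 1) && !decide (σ₁ j = t₀))
      (if M (.inl j) = 1 then (bif α j then X else Y) else Lob X Y (L (.inl (σ₁ j))))
      (if σ₁ j = t₀ then (bif α j then X else Y) else Lob X Y (L (.inl (σ₁ j)))) := by
  by_cases hσ : σ₁ j = t₀
  · rw [decide_eq_true hσ]
    simp only [Bool.not_true, Bool.and_false]
    cases hα : α j
    · have h0 := inl_fact_con hLM hen hLt hσ hα
      show _ = _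
      simp [h0, hσ, hα, hLt, Lob]
    · have h1 := inl_fact_cov hLM hen hLt hσ hα
      show _ = _
      simp [h1, hσ, hα, Lob]
  · rw [decide_eq_false hσ]
    simp only [Bool.not_false, Bool.and_true]
    by_cases hM : M (.inl j) = 1
    · rw [decide_eq_true hM]
      cases hα : α j
      · have hL : L (.inl (σ₁ j)) = false := hLM.in_label _ _ hM (by simp [cgIn, hα])
        exact ⟨by simp [hM, hα], by simp [hσ, hL, Lob]⟩
      · have hL : L (.inl (σ₁ j)) = true := hLM.out_label _ _ hM (by simp [cgOut, hα])
        exact ⟨by simp [hM, hα], by simp [hσ, hL, Lob]⟩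
    · rw [decide_eq_false hM]
      cases hα : α j
      all_goals show _ = _
      all_goals simp [hM, hσ]

theorem gcond_rInl (j : Fin wb) :
    GCond X Y (β j) (decide (M (.inr (.inl j)) = 1) && !decide (τ₁ j = t₀))
      (if τ₁ j = t₀ then (bif β j then Y else X) else Lob X Y (L (.inl (τ₁ j))))
      (Lob X Y (L (.inr (σ₂ j)))) := by
  by_cases hτ : τ₁ j = t₀
  · rw [decide_eq_true hτ]
    simp only [Bool.not_true, Bool.and_false]
    cases hβ : β j
    · have h1 := inl_fact_mid_con hLM hen hLt hτ hβ
      have hL : L (.inr (σ₂ j)) = false := hLM.in_label _ _ h1 (by simp [cgIn, hβ])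
      show _ = _
      simp [hτ, hβ, hL, Lob]
    · have h0 := inl_fact_mid_cov hLM hen hLt hτ hβ
      have heq := hLM.eq_label (.inr (.inl j)) (.inl (τ₁ j)) (.inr (σ₂ j)) h0
        (by simp [cgIn, hβ]) (by simp [cgOut, hβ])
      show _ = _
      rw [if_pos hτ, ← heq, hτ, hLt]
      rfl
  · rw [decide_eq_false hτ]
    simp only [Bool.not_false, Bool.and_true]
    by_cases hM : M (.inr (.inl j)) = 1
    · rw [decide_eq_true hM]
      cases hβ : β j
      · have h1 : L (.inr (σ₂ j)) = false := hLM.in_label _ _ hM (by simp [cgIn, hβ])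
        have h2 : L (.inl (τ₁ j)) = true := hLM.out_label _ _ hM (by simp [cgOut, hβ])
        exact ⟨by simp [hτ, h2, Lob], by simp [h1, Lob]⟩
      · have h1 : L (.inl (τ₁ j)) = false := hLM.in_label _ _ hM (by simp [cgIn, hβ])
        have h2 : L (.inr (σ₂ j)) = true := hLM.out_label _ _ hM (by simp [cgOut, hβ])
        exact ⟨by simp [hτ, h1, Lob], by simp [h2, Lob]⟩
    · rw [decide_eq_false hM]
      have hM0 : M (.inr (.inl j)) = 0 := by have := hLM.le_one (.inr (.inl j)); omega
      cases hβ : β j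
      · have heq := hLM.eq_label (.inr (.inl j)) (.inr (σ₂ j)) (.inl (τ₁ j)) hM0
          (by simp [cgIn, hβ]) (by simp [cgOut, hβ])
        show _ = _
        rw [if_neg hτ, heq]
      · have heq := hLM.eq_label (.inr (.inl j)) (.inl (τ₁ j)) (.inr (σ₂ j)) hM0
          (by simp [cgIn, hβ]) (by simp [cgOut, hβ])
        show _ = _
        rw [if_neg hτ, heq]

end InlObj

section InrObj

variable (hLM : IsLabelledMarking α β γ σ₁ τ₁ σ₂ τ₂ X Y M L) {t₁ : Fin m}
  (hen : cgEnabled α β γ σ₁ τ₁ σ₂ τ₂ M (.inr t₁))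
  (hLt : L (.inr t₁) = true)

include hLM hen hLt

theorem upd_L2_Y : upd (L2 X Y L) t₁ Y = L2 X Y L := by
  funext k
  by_cases hk : k = t₁
  · subst hk; simp [upd, L2, hLt, Lob]
  · simp [upd, hk]

theorem L2_relabel_inr :
    L2 X Y (fun s : CGT n m => if s = .inr t₁ then false else L s)
      = upd (L2 X Y L) t₁ X := by
  funext k
  by_cases hk : k = t₁
  · subst hk; simp [upd, L2, Lob]
  · simp [upd, L2, hk, Sum.inr.injEq]

theorem L1_relabel_inr :
    L1 X Y (fun s : CGT n m => if s = .inr t₁ then false else L s) = L1 X Y L := by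
  funext k
  simp [L1]

theorem startT_fire_inr :
    startT α σ₁ M L X Y
      = startT α σ₁ (cgFire α β γ σ₁ τ₁ σ₂ τ₂ M (.inr t₁))
          (fun s : CGT n m => if s = .inr t₁ then false else L s) X Y := by
  funext j
  show toSign (α j) _ = toSign (α j) _
  apply congrArg
  rw [cgFire_inr_left t₁ j]
  simp

theorem endT_fire_inr :
    endT γ τ₂ M L X Y
      = endT γ τ₂ (cgFire α β γ σ₁ τ₁ σ₂ τ₂ M (.inr t₁))
          (fun s : CGT n m => if s = .inr t₁ then false else L s) X Y := by
  funext j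
  show toSign (γ j) _ = toSign (γ j) _
  apply congrArg
  rw [cgFire_inr_right t₁ j]
  by_cases hτ : τ₂ j = t₁
  · cases hγ : γ j
    · have h1 := inr_fact_cov hLM hen hLt hτ hγ
      simp [hτ, hγ, h1, Lob]
    · have h0 := inr_fact_con hLM hen hLt hτ hγ
      simp [hτ, hγ, h0, hLt, Lob]
  · simp [hτ]

theorem gcond_cInr (j : Fin wb) :
    GCond X Y (β j) (decide (M (.inr (.inl j)) = 1) && !decide (σ₂ j = t₁))
      (Lob X Y (L (.inl (τ₁ j))))
      (if σ₂ j = t₁ then (bif β j then X else Y) else Lob X Y (L (.inr (σ₂ j)))) := by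
  by_cases hσ : σ₂ j = t₁
  · rw [decide_eq_true hσ]
    simp only [Bool.not_true, Bool.and_false]
    cases hβ : β j
    · have h0 := inr_fact_mid_con hLM hen hLt hσ hβ
      have heq := hLM.eq_label (.inr (.inl j)) (.inr (σ₂ j)) (.inl (τ₁ j)) h0
        (by simp [cgIn, hβ]) (by simp [cgOut, hβ])
      show _ = _
      rw [if_pos hσ, ← heq, hσ, hLt]
      rfl
    · have h1 := inr_fact_mid_cov hLM hen hLt hσ hβ
      have hL : L (.inl (τ₁ j)) = false := hLM.in_label _ _ h1 (by simp [cgIn, hβ])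
      show _ = _
      simp [hσ, hβ, hL, Lob]
  · rw [decide_eq_false hσ]
    simp only [Bool.not_false, Bool.and_true]
    by_cases hM : M (.inr (.inl j)) = 1
    · rw [decide_eq_true hM]
      cases hβ : β j
      · have h1 : L (.inr (σ₂ j)) = false := hLM.in_label _ _ hM (by simp [cgIn, hβ])
        have h2 : L (.inl (τ₁ j)) = true := hLM.out_label _ _ hM (by simp [cgOut, hβ])
        exact ⟨by simp [h2, Lob], by simp [hσ, h1, Lob]⟩
      · have h1 : L (.inl (τ₁ j)) = false := hLM.in_label _ _ hM (by simp [cgIn, hβ])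
        have h2 : L (.inr (σ₂ j)) = true := hLM.out_label _ _ hM (by simp [cgOut, hβ])
        exact ⟨by simp [h1, Lob], by simp [hσ, h2, Lob]⟩
    · rw [decide_eq_false hM]
      have hM0 : M (.inr (.inl j)) = 0 := by have := hLM.le_one (.inr (.inl j)); omega
      cases hβ : β j
      · have heq := hLM.eq_label (.inr (.inl j)) (.inr (σ₂ j)) (.inl (τ₁ j)) hM0
          (by simp [cgIn, hβ]) (by simp [cgOut, hβ])
        show _ = _
        rw [if_neg hσ, heq]
      · have heq := hLM.eq_label (.inr (.inl j)) (.inl (τ₁ j)) (.inr (σ₂ j)) hM0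
          (by simp [cgIn, hβ]) (by simp [cgOut, hβ])
        show _ = _
        rw [if_neg hσ, heq]

theorem gcond_rInr (j : Fin wc) :
    GCond X Y (γ j) (decide (M (.inr (.inr j)) = 1) && !decide (τ₂ j = t₁))
      (if τ₂ j = t₁ then (bif γ j then Y else X) else Lob X Y (L (.inr (τ₂ j))))
      (if M (.inr (.inr j)) = 1 then (bif γ j then Y else X) else Lob X Y (L (.inr (τ₂ j)))) := by
  by_cases hτ : τ₂ j = t₁
  · rw [decide_eq_true hτ]
    simp only [Bool.not_true, Bool.and_false]
    cases hγ : γ j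
    · have h1 := inr_fact_cov hLM hen hLt hτ hγ
      show _ = _
      simp [hτ, hγ, h1, Lob]
    · have h0 := inr_fact_con hLM hen hLt hτ hγ
      show _ = _
      simp [hτ, hγ, h0, hLt, Lob]
  · rw [decide_eq_false hτ]
    simp only [Bool.not_false, Bool.and_true]
    by_cases hM : M (.inr (.inr j)) = 1
    · rw [decide_eq_true hM]
      cases hγ : γ j
      · have hL : L (.inr (τ₂ j)) = true := hLM.out_label _ _ hM (by simp [cgOut, hγ])
        exact ⟨by simp [hτ, hL, Lob], by simp [hM, hγ]⟩
      · have hL : L (.inr (τ₂ j)) = false := hLM.in_label _ _ hM (by simp [cgIn, hγ])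
        exact ⟨by simp [hτ, hL, Lob], by simp [hM, hγ]⟩
    · rw [decide_eq_false hM]
      cases hγ : γ j
      all_goals show _ = _
      all_goals simp [hM, hτ]

end InrObj

end ObjEq
section TransfConj

variable {B : Type u} [Category.{v} B] {C : Type u'} [Category.{v'} C] {κa κb ι : Type}
  {α : κa → Bool} {β : κb → Bool} {F : PowCat B α ⥤ C} {G : PowCat B β ⥤ C}
  {σ : κa → ι} {τ : κb → ι}

theorem transf_conj (φ : Transf α β F G σ τ) {A A' : ι → B} (h : A' = A)
    (e₁ : F.obj (tup α σ A') = F.obj (tup α σ A))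
    (e₂ : G.obj (tup β τ A) = G.obj (tup β τ A')) :
    φ A' = eqToHom e₁ ≫ φ A ≫ eqToHom e₂ := by
  subst h; simp

theorem transf_conj_reassoc (φ : Transf α β F G σ τ) {A A' : ι → B} (h : A' = A)
    (e₁ : F.obj (tup α σ A') = F.obj (tup α σ A))
    (e₂ : G.obj (tup β τ A) = G.obj (tup β τ A')) {W : C}
    (k : G.obj (tup β τ A') ⟶ W) :
    eqToHom e₁ ≫ φ A ≫ eqToHom e₂ ≫ k = φ A' ≫ k := by
  subst h; simp

end TransfConj

section StepInl

variable {B : Type u} [Category.{v} B] {C : Type u'} [Category.{v'} C]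
  {wa wb wc n m : ℕ}
  {α : Fin wa → Bool} {β : Fin wb → Bool} {γ : Fin wc → Bool}
  {σ₁ : Fin wa → Fin n} {τ₁ : Fin wb → Fin n}
  {σ₂ : Fin wb → Fin m} {τ₂ : Fin wc → Fin m}
  {X Y : B} {M : CGP wa wb wc → ℕ} {L : CGT n m → Bool}
  (hLM : IsLabelledMarking α β γ σ₁ τ₁ σ₂ τ₂ X Y M L) {t₀ : Fin n}
  (hen : cgEnabled α β γ σ₁ τ₁ σ₂ τ₂ M (.inl t₀))
  (hLt : L (.inl t₀) = true)

/-- The comparison morphism into the hexagon vertex, on the `F₁` side. -/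
def cInl (f : X ⟶ Y) :
    startT α σ₁ M L X Y ⟶ tupMV α σ₁ (L1 X Y L) t₀ (fun s => bif s then X else Y) :=
  fun j => toSignHom
    (ghom f (α j) (decide (M (.inl j) = 1) && !decide (σ₁ j = t₀)) _ _
      (gcond_cInl hLM hen hLt j))

theorem isGhom_cInl (f : X ⟶ Y) (j : Fin wa) :
    IsGhom f (decide (M (.inl j) = 1) && !decide (σ₁ j = t₀)) (cInl hLM hen hLt f j) :=
  ⟨_, rfl⟩

/-- The comparison morphism out of the hexagon vertex, on the `F₂` side. -/
def rInl (f : X ⟶ Y) :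
    tupMV β τ₁ (L1 X Y L) t₀ (fun s => bif s then Y else X) ⟶ tup β σ₂ (L2 X Y L) :=
  fun j => toSignHom
    (ghom f (β j) (decide (M (.inr (.inl j)) = 1) && !decide (τ₁ j = t₀)) _ _
      (gcond_rInl hLM hen hLt j))

theorem isGhom_rInl (f : X ⟶ Y) (j : Fin wb) :
    IsGhom f (decide (M (.inr (.inl j)) = 1) && !decide (τ₁ j = t₀)) (rInl hLM hen hLt f j) :=
  ⟨_, rfl⟩

theorem fac1Y_inl (f : X ⟶ Y)
    (e : tupMV α σ₁ (L1 X Y L) t₀ (fun _ => Y) = tup α σ₁ (L1 X Y L)) :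
    mor1 α β γ σ₁ τ₁ σ₂ τ₂ hLM f
      = cInl hLM hen hLt f ≫
          tupMVHom α σ₁ (L1 X Y L) t₀ (fun s => bif s then X else Y) (fun _ => Y) (𝟙 Y) f ≫
          eqToHom e := by
  funext j
  show mor1 α β γ σ₁ τ₁ σ₂ τ₂ hLM f j
      = cInl hLM hen hLt f j ≫
          tupMVHom α σ₁ (L1 X Y L) t₀ (fun s => bif s then X else Y) (fun _ => Y) (𝟙 Y) f j ≫
          (eqToHom e) j
  rw [pi_eqToHom_apply]
  refine (isGhom_mor1 hLM f j).unique (IsGhom.of_mk_eq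
    (IsGhom.comp (isGhom_cInl hLM hen hLt f j)
      (IsGhom.comp (isGhom_tupMVHom_XY_Y α σ₁ (L1 X Y L) t₀ f j) (isGhom_eqToHom f _)
        (Or.inr rfl)) ?_) ?_)
  · by_cases hσ : σ₁ j = t₀
    · exact Or.inl (by simp [hσ])
    · exact Or.inr (by simp [hσ])
  · by_cases hσ : σ₁ j = t₀
    · cases hα : α j
      · have h0 := inl_fact_con hLM hen hLt hσ hα
        simp [hσ, hα, h0]
      · have h1 := inl_fact_cov hLM hen hLt hσ hα
        simp [hσ, hα, h1]
    · simp [hσ]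

theorem fac1X_inl (f : X ⟶ Y)
    (hLM' : IsLabelledMarking α β γ σ₁ τ₁ σ₂ τ₂ X Y (cgFire α β γ σ₁ τ₁ σ₂ τ₂ M (.inl t₀))
      (fun s : CGT n m => if s = .inl t₀ then false else L s))
    (e₁ : startT α σ₁ (cgFire α β γ σ₁ τ₁ σ₂ τ₂ M (.inl t₀))
        (fun s : CGT n m => if s = .inl t₀ then false else L s) X Y = startT α σ₁ M L X Y)
    (e₂ : tupMV α σ₁ (L1 X Y L) t₀ (fun _ => X)
        = tup α σ₁ (L1 X Y (fun s : CGT n m => if s = .inl t₀ then false else L s))) :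
    mor1 α β γ σ₁ τ₁ σ₂ τ₂ hLM' f
      = eqToHom e₁ ≫ cInl hLM hen hLt f ≫
          tupMVHom α σ₁ (L1 X Y L) t₀ (fun s => bif s then X else Y) (fun _ => X) f (𝟙 X) ≫
          eqToHom e₂ := by
  funext j
  show mor1 α β γ σ₁ τ₁ σ₂ τ₂ hLM' f j
      = (eqToHom e₁) j ≫ cInl hLM hen hLt f j ≫
          tupMVHom α σ₁ (L1 X Y L) t₀ (fun s => bif s then X else Y) (fun _ => X) f (𝟙 X) j ≫
          (eqToHom e₂) j
  rw [pi_eqToHom_apply, pi_eqToHom_apply]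
  refine (isGhom_mor1 hLM' f j).unique (IsGhom.of_mk_eq
    (IsGhom.comp (isGhom_eqToHom f _)
      (IsGhom.comp (isGhom_cInl hLM hen hLt f j)
        (IsGhom.comp (isGhom_tupMVHom_XY_X α σ₁ (L1 X Y L) t₀ f j) (isGhom_eqToHom f _)
          (Or.inr rfl)) ?_) (Or.inl rfl)) ?_)
  · by_cases hσ : σ₁ j = t₀
    · exact Or.inl (by simp [hσ])
    · exact Or.inr (by simp [hσ])
  · rw [cgFire_inl_left t₀ j]
    by_cases hσ : σ₁ j = t₀
    · cases hα : α j
      · have h0 := inl_fact_con hLM hen hLt hσ hα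
        simp [hσ, hα, h0]
      · have h1 := inl_fact_cov hLM hen hLt hσ hα
        simp [hσ, hα, h1]
    · simp [hσ]

theorem fac2Y_inl (f : X ⟶ Y)
    (e : tup β τ₁ (L1 X Y L) = tupMV β τ₁ (L1 X Y L) t₀ (fun _ => Y)) :
    mor2 α β γ σ₁ τ₁ σ₂ τ₂ hLM f
      = eqToHom e ≫
          tupMVHom β τ₁ (L1 X Y L) t₀ (fun _ => Y) (fun s => bif s then Y else X) f (𝟙 Y) ≫
          rInl hLM hen hLt f := by
  funext j
  show mor2 α β γ σ₁ τ₁ σ₂ τ₂ hLM f j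
      = (eqToHom e) j ≫
          tupMVHom β τ₁ (L1 X Y L) t₀ (fun _ => Y) (fun s => bif s then Y else X) f (𝟙 Y) j ≫
          rInl hLM hen hLt f j
  rw [pi_eqToHom_apply]
  refine (isGhom_mor2 hLM f j).unique (IsGhom.of_mk_eq
    (IsGhom.comp (isGhom_eqToHom f _)
      (IsGhom.comp (isGhom_tupMVHom_Y_YX β τ₁ (L1 X Y L) t₀ f j)
        (isGhom_rInl hLM hen hLt f j) ?_) (Or.inl rfl)) ?_)
  · by_cases hτ : τ₁ j = t₀
    · exact Or.inr (by simp [hτ])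
    · exact Or.inl (by simp [hτ])
  · by_cases hτ : τ₁ j = t₀
    · cases hβ : β j
      · have h1 := inl_fact_mid_con hLM hen hLt hτ hβ
        simp [hτ, hβ, h1]
      · have h0 := inl_fact_mid_cov hLM hen hLt hτ hβ
        simp [hτ, hβ, h0]
    · simp [hτ]

theorem fac2X_inl (f : X ⟶ Y)
    (hLM' : IsLabelledMarking α β γ σ₁ τ₁ σ₂ τ₂ X Y (cgFire α β γ σ₁ τ₁ σ₂ τ₂ M (.inl t₀))
      (fun s : CGT n m => if s = .inl t₀ then false else L s))
    (e₁ : tup β τ₁ (L1 X Y (fun s : CGT n m => if s = .inl t₀ then false else L s))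
        = tupMV β τ₁ (L1 X Y L) t₀ (fun _ => X))
    (e₂ : tup β σ₂ (L2 X Y L)
        = tup β σ₂ (L2 X Y (fun s : CGT n m => if s = .inl t₀ then false else L s))) :
    mor2 α β γ σ₁ τ₁ σ₂ τ₂ hLM' f
      = eqToHom e₁ ≫
          tupMVHom β τ₁ (L1 X Y L) t₀ (fun _ => X) (fun s => bif s then Y else X) (𝟙 X) f ≫
          rInl hLM hen hLt f ≫ eqToHom e₂ := by
  funext j
  show mor2 α β γ σ₁ τ₁ σ₂ τ₂ hLM' f j
      = (eqToHom e₁) j ≫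
          tupMVHom β τ₁ (L1 X Y L) t₀ (fun _ => X) (fun s => bif s then Y else X) (𝟙 X) f j ≫
          rInl hLM hen hLt f j ≫ (eqToHom e₂) j
  rw [pi_eqToHom_apply, pi_eqToHom_apply]
  refine (isGhom_mor2 hLM' f j).unique (IsGhom.of_mk_eq
    (IsGhom.comp (isGhom_eqToHom f _)
      (IsGhom.comp (isGhom_tupMVHom_X_YX β τ₁ (L1 X Y L) t₀ f j)
        (IsGhom.comp (isGhom_rInl hLM hen hLt f j) (isGhom_eqToHom f _) (Or.inr rfl)) ?_)
      (Or.inl rfl)) ?_)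
  · by_cases hτ : τ₁ j = t₀
    · exact Or.inr (by simp [hτ])
    · exact Or.inl (by simp [hτ])
  · rw [cgFire_inl_mid t₀ j]
    by_cases hτ : τ₁ j = t₀
    · cases hβ : β j
      · have h1 := inl_fact_mid_con hLM hen hLt hτ hβ
        simp [hτ, hβ, h1]
      · have h0 := inl_fact_mid_cov hLM hen hLt hτ hβ
        simp [hτ, hβ, h0]
    · simp [hτ]

theorem fac3_inl (f : X ⟶ Y)
    (hLM' : IsLabelledMarking α β γ σ₁ τ₁ σ₂ τ₂ X Y (cgFire α β γ σ₁ τ₁ σ₂ τ₂ M (.inl t₀))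
      (fun s : CGT n m => if s = .inl t₀ then false else L s))
    (e₁ : tup γ τ₂ (L2 X Y (fun s : CGT n m => if s = .inl t₀ then false else L s))
        = tup γ τ₂ (L2 X Y L))
    (e₂ : endT γ τ₂ M L X Y
        = endT γ τ₂ (cgFire α β γ σ₁ τ₁ σ₂ τ₂ M (.inl t₀))
            (fun s : CGT n m => if s = .inl t₀ then false else L s) X Y) :
    mor3 α β γ σ₁ τ₁ σ₂ τ₂ hLM' f
      = eqToHom e₁ ≫ mor3 α β γ σ₁ τ₁ σ₂ τ₂ hLM f ≫ eqToHom e₂ := by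
  funext j
  show mor3 α β γ σ₁ τ₁ σ₂ τ₂ hLM' f j
      = (eqToHom e₁) j ≫ mor3 α β γ σ₁ τ₁ σ₂ τ₂ hLM f j ≫ (eqToHom e₂) j
  rw [pi_eqToHom_apply, pi_eqToHom_apply]
  refine (isGhom_mor3 hLM' f j).unique (IsGhom.of_mk_eq
    (IsGhom.comp (isGhom_eqToHom f _)
      (IsGhom.comp (isGhom_mor3 hLM f j) (isGhom_eqToHom f _) (Or.inr rfl))
      (Or.inl rfl)) ?_)
  rw [cgFire_inl_right t₀ j]
  simp

end StepInl
section StepInlMain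

variable {B : Type u} [Category.{v} B] {C : Type u'} [Category.{v'} C]
  {wa wb wc n m : ℕ}
  {α : Fin wa → Bool} {β : Fin wb → Bool} {γ : Fin wc → Bool}
  {σ₁ : Fin wa → Fin n} {τ₁ : Fin wb → Fin n}
  {σ₂ : Fin wb → Fin m} {τ₂ : Fin wc → Fin m}
  {X Y : B} {M : CGP wa wb wc → ℕ} {L : CGT n m → Bool}
  {F₁ : PowCat B α ⥤ C} {F₂ : PowCat B β ⥤ C} {F₃ : PowCat B γ ⥤ C}

theorem step_inl (φ : Transf α β F₁ F₂ σ₁ τ₁) (ψ : Transf β γ F₂ F₃ σ₂ τ₂)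
    (hLM : IsLabelledMarking α β γ σ₁ τ₁ σ₂ τ₂ X Y M L) {t₀ : Fin n}
    (hen : cgEnabled α β γ σ₁ τ₁ σ₂ τ₂ M (.inl t₀))
    (hLt : L (.inl t₀) = true)
    (hφ : DinatAt φ t₀) (f : X ⟶ Y)
    (hLM' : IsLabelledMarking α β γ σ₁ τ₁ σ₂ τ₂ X Y (cgFire α β γ σ₁ τ₁ σ₂ τ₂ M (.inl t₀))
      (fun s : CGT n m => if s = .inl t₀ then false else L s)) :
    interp α β γ σ₁ τ₁ σ₂ τ₂ φ ψ M L hLM f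
      = eqToHom (congrArg F₁.obj (startT_fire_inl hLM hen hLt)) ≫
        interp α β γ σ₁ τ₁ σ₂ τ₂ φ ψ _ _ hLM' f ≫
        eqToHom (congrArg F₃.obj (endT_fire_inl hLM hen hLt)).symm := by
  have hA := upd_L1_Y hLM hen hLt
  have hA' := L1_relabel_inl hLM hen hLt
  have hL2 := L2_relabel_inl hLM hen hLt
  have din := hφ (L1 X Y L) f
  unfold interp
  rw [fac1Y_inl hLM hen hLt f (congrArg (tup α σ₁) hA),
      fac1X_inl hLM hen hLt f hLM' (startT_fire_inl hLM hen hLt).symm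
        (congrArg (tup α σ₁) hA').symm,
      fac2Y_inl hLM hen hLt f (congrArg (tup β τ₁) hA).symm,
      fac2X_inl hLM hen hLt f hLM' (congrArg (tup β τ₁) hA')
        (congrArg (tup β σ₂) hL2).symm,
      fac3_inl hLM f hLM' (congrArg (tup γ τ₂) hL2) (endT_fire_inl hLM hen hLt),
      transf_conj φ hA' (by rw [hA']) (by rw [hA']),
      transf_conj ψ hL2 (by rw [hL2]) (by rw [hL2])]
  simp only [Functor.map_comp, Category.assoc, eqToHom_map, eqToHom_trans, eqToHom_refl,
    Category.comp_id, Category.id_comp, eqToHom_trans_assoc]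
  rw [transf_conj_reassoc φ hA (by rw [hA]) (by rw [hA])]
  rw [← reassoc_of% din]

end StepInlMain
section StepInr

variable {B : Type u} [Category.{v} B] {C : Type u'} [Category.{v'} C]
  {wa wb wc n m : ℕ}
  {α : Fin wa → Bool} {β : Fin wb → Bool} {γ : Fin wc → Bool}
  {σ₁ : Fin wa → Fin n} {τ₁ : Fin wb → Fin n}
  {σ₂ : Fin wb → Fin m} {τ₂ : Fin wc → Fin m}
  {X Y : B} {M : CGP wa wb wc → ℕ} {L : CGT n m → Bool}
  (hLM : IsLabelledMarking α β γ σ₁ τ₁ σ₂ τ₂ X Y M L) {t₁ : Fin m}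
  (hen : cgEnabled α β γ σ₁ τ₁ σ₂ τ₂ M (.inr t₁))
  (hLt : L (.inr t₁) = true)

/-- The comparison morphism into the hexagon vertex, on the `F₂` side. -/
def cInr (f : X ⟶ Y) :
    tup β τ₁ (L1 X Y L) ⟶ tupMV β σ₂ (L2 X Y L) t₁ (fun s => bif s then X else Y) :=
  fun j => toSignHom
    (ghom f (β j) (decide (M (.inr (.inl j)) = 1) && !decide (σ₂ j = t₁)) _ _
      (gcond_cInr hLM hen hLt j))

theorem isGhom_cInr (f : X ⟶ Y) (j : Fin wb) :
    IsGhom f (decide (M (.inr (.inl j)) = 1) && !decide (σ₂ j = t₁)) (cInr hLM hen hLt f j) :=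
  ⟨_, rfl⟩

/-- The comparison morphism out of the hexagon vertex, on the `F₃` side. -/
def rInr (f : X ⟶ Y) :
    tupMV γ τ₂ (L2 X Y L) t₁ (fun s => bif s then Y else X) ⟶ endT γ τ₂ M L X Y :=
  fun j => toSignHom
    (ghom f (γ j) (decide (M (.inr (.inr j)) = 1) && !decide (τ₂ j = t₁)) _ _
      (gcond_rInr hLM hen hLt j))

theorem isGhom_rInr (f : X ⟶ Y) (j : Fin wc) :
    IsGhom f (decide (M (.inr (.inr j)) = 1) && !decide (τ₂ j = t₁)) (rInr hLM hen hLt f j) :=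
  ⟨_, rfl⟩

theorem fac2Y_inr (f : X ⟶ Y)
    (e : tupMV β σ₂ (L2 X Y L) t₁ (fun _ => Y) = tup β σ₂ (L2 X Y L)) :
    mor2 α β γ σ₁ τ₁ σ₂ τ₂ hLM f
      = cInr hLM hen hLt f ≫
          tupMVHom β σ₂ (L2 X Y L) t₁ (fun s => bif s then X else Y) (fun _ => Y) (𝟙 Y) f ≫
          eqToHom e := by
  funext j
  show mor2 α β γ σ₁ τ₁ σ₂ τ₂ hLM f j
      = cInr hLM hen hLt f j ≫
          tupMVHom β σ₂ (L2 X Y L) t₁ (fun s => bif s then X else Y) (fun _ => Y) (𝟙 Y) f j ≫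
          (eqToHom e) j
  rw [pi_eqToHom_apply]
  refine (isGhom_mor2 hLM f j).unique (IsGhom.of_mk_eq
    (IsGhom.comp (isGhom_cInr hLM hen hLt f j)
      (IsGhom.comp (isGhom_tupMVHom_XY_Y β σ₂ (L2 X Y L) t₁ f j) (isGhom_eqToHom f _)
        (Or.inr rfl)) ?_) ?_)
  · by_cases hσ : σ₂ j = t₁
    · exact Or.inl (by simp [hσ])
    · exact Or.inr (by simp [hσ])
  · by_cases hσ : σ₂ j = t₁
    · cases hβ : β j
      · have h0 := inr_fact_mid_con hLM hen hLt hσ hβ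
        simp [hσ, hβ, h0]
      · have h1 := inr_fact_mid_cov hLM hen hLt hσ hβ
        simp [hσ, hβ, h1]
    · simp [hσ]

theorem fac2X_inr (f : X ⟶ Y)
    (hLM' : IsLabelledMarking α β γ σ₁ τ₁ σ₂ τ₂ X Y (cgFire α β γ σ₁ τ₁ σ₂ τ₂ M (.inr t₁))
      (fun s : CGT n m => if s = .inr t₁ then false else L s))
    (e₁ : tup β τ₁ (L1 X Y (fun s : CGT n m => if s = .inr t₁ then false else L s))
        = tup β τ₁ (L1 X Y L))
    (e₂ : tupMV β σ₂ (L2 X Y L) t₁ (fun _ => X)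
        = tup β σ₂ (L2 X Y (fun s : CGT n m => if s = .inr t₁ then false else L s))) :
    mor2 α β γ σ₁ τ₁ σ₂ τ₂ hLM' f
      = eqToHom e₁ ≫ cInr hLM hen hLt f ≫
          tupMVHom β σ₂ (L2 X Y L) t₁ (fun s => bif s then X else Y) (fun _ => X) f (𝟙 X) ≫
          eqToHom e₂ := by
  funext j
  show mor2 α β γ σ₁ τ₁ σ₂ τ₂ hLM' f j
      = (eqToHom e₁) j ≫ cInr hLM hen hLt f j ≫
          tupMVHom β σ₂ (L2 X Y L) t₁ (fun s => bif s then X else Y) (fun _ => X) f (𝟙 X) j ≫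
          (eqToHom e₂) j
  rw [pi_eqToHom_apply, pi_eqToHom_apply]
  refine (isGhom_mor2 hLM' f j).unique (IsGhom.of_mk_eq
    (IsGhom.comp (isGhom_eqToHom f _)
      (IsGhom.comp (isGhom_cInr hLM hen hLt f j)
        (IsGhom.comp (isGhom_tupMVHom_XY_X β σ₂ (L2 X Y L) t₁ f j) (isGhom_eqToHom f _)
          (Or.inr rfl)) ?_) (Or.inl rfl)) ?_)
  · by_cases hσ : σ₂ j = t₁
    · exact Or.inl (by simp [hσ])
    · exact Or.inr (by simp [hσ])
  · rw [cgFire_inr_mid t₁ j]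
    by_cases hσ : σ₂ j = t₁
    · cases hβ : β j
      · have h0 := inr_fact_mid_con hLM hen hLt hσ hβ
        simp [hσ, hβ, h0]
      · have h1 := inr_fact_mid_cov hLM hen hLt hσ hβ
        simp [hσ, hβ, h1]
    · simp [hσ]

theorem fac3Y_inr (f : X ⟶ Y)
    (e : tup γ τ₂ (L2 X Y L) = tupMV γ τ₂ (L2 X Y L) t₁ (fun _ => Y)) :
    mor3 α β γ σ₁ τ₁ σ₂ τ₂ hLM f
      = eqToHom e ≫
          tupMVHom γ τ₂ (L2 X Y L) t₁ (fun _ => Y) (fun s => bif s then Y else X) f (𝟙 Y) ≫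
          rInr hLM hen hLt f := by
  funext j
  show mor3 α β γ σ₁ τ₁ σ₂ τ₂ hLM f j
      = (eqToHom e) j ≫
          tupMVHom γ τ₂ (L2 X Y L) t₁ (fun _ => Y) (fun s => bif s then Y else X) f (𝟙 Y) j ≫
          rInr hLM hen hLt f j
  rw [pi_eqToHom_apply]
  refine (isGhom_mor3 hLM f j).unique (IsGhom.of_mk_eq
    (IsGhom.comp (isGhom_eqToHom f _)
      (IsGhom.comp (isGhom_tupMVHom_Y_YX γ τ₂ (L2 X Y L) t₁ f j)
        (isGhom_rInr hLM hen hLt f j) ?_) (Or.inl rfl)) ?_)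
  · by_cases hτ : τ₂ j = t₁
    · exact Or.inr (by simp [hτ])
    · exact Or.inl (by simp [hτ])
  · by_cases hτ : τ₂ j = t₁
    · cases hγ : γ j
      · have h1 := inr_fact_cov hLM hen hLt hτ hγ
        simp [hτ, hγ, h1]
      · have h0 := inr_fact_con hLM hen hLt hτ hγ
        simp [hτ, hγ, h0]
    · simp [hτ]

theorem fac3X_inr (f : X ⟶ Y)
    (hLM' : IsLabelledMarking α β γ σ₁ τ₁ σ₂ τ₂ X Y (cgFire α β γ σ₁ τ₁ σ₂ τ₂ M (.inr t₁))
      (fun s : CGT n m => if s = .inr t₁ then false else L s))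
    (e₁ : tup γ τ₂ (L2 X Y (fun s : CGT n m => if s = .inr t₁ then false else L s))
        = tupMV γ τ₂ (L2 X Y L) t₁ (fun _ => X))
    (e₂ : endT γ τ₂ M L X Y
        = endT γ τ₂ (cgFire α β γ σ₁ τ₁ σ₂ τ₂ M (.inr t₁))
            (fun s : CGT n m => if s = .inr t₁ then false else L s) X Y) :
    mor3 α β γ σ₁ τ₁ σ₂ τ₂ hLM' f
      = eqToHom e₁ ≫
          tupMVHom γ τ₂ (L2 X Y L) t₁ (fun _ => X) (fun s => bif s then Y else X) (𝟙 X) f ≫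
          rInr hLM hen hLt f ≫ eqToHom e₂ := by
  funext j
  show mor3 α β γ σ₁ τ₁ σ₂ τ₂ hLM' f j
      = (eqToHom e₁) j ≫
          tupMVHom γ τ₂ (L2 X Y L) t₁ (fun _ => X) (fun s => bif s then Y else X) (𝟙 X) f j ≫
          rInr hLM hen hLt f j ≫ (eqToHom e₂) j
  rw [pi_eqToHom_apply, pi_eqToHom_apply]
  refine (isGhom_mor3 hLM' f j).unique (IsGhom.of_mk_eq
    (IsGhom.comp (isGhom_eqToHom f _)
      (IsGhom.comp (isGhom_tupMVHom_X_YX γ τ₂ (L2 X Y L) t₁ f j)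
        (IsGhom.comp (isGhom_rInr hLM hen hLt f j) (isGhom_eqToHom f _) (Or.inr rfl)) ?_)
      (Or.inl rfl)) ?_)
  · by_cases hτ : τ₂ j = t₁
    · exact Or.inr (by simp [hτ])
    · exact Or.inl (by simp [hτ])
  · rw [cgFire_inr_right t₁ j]
    by_cases hτ : τ₂ j = t₁
    · cases hγ : γ j
      · have h1 := inr_fact_cov hLM hen hLt hτ hγ
        simp [hτ, hγ, h1]
      · have h0 := inr_fact_con hLM hen hLt hτ hγ
        simp [hτ, hγ, h0]
    · simp [hτ]

theorem fac1_inr (f : X ⟶ Y)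
    (hLM' : IsLabelledMarking α β γ σ₁ τ₁ σ₂ τ₂ X Y (cgFire α β γ σ₁ τ₁ σ₂ τ₂ M (.inr t₁))
      (fun s : CGT n m => if s = .inr t₁ then false else L s))
    (e₁ : startT α σ₁ (cgFire α β γ σ₁ τ₁ σ₂ τ₂ M (.inr t₁))
        (fun s : CGT n m => if s = .inr t₁ then false else L s) X Y = startT α σ₁ M L X Y)
    (e₂ : tup α σ₁ (L1 X Y L)
        = tup α σ₁ (L1 X Y (fun s : CGT n m => if s = .inr t₁ then false else L s))) :
    mor1 α β γ σ₁ τ₁ σ₂ τ₂ hLM' f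
      = eqToHom e₁ ≫ mor1 α β γ σ₁ τ₁ σ₂ τ₂ hLM f ≫ eqToHom e₂ := by
  funext j
  show mor1 α β γ σ₁ τ₁ σ₂ τ₂ hLM' f j
      = (eqToHom e₁) j ≫ mor1 α β γ σ₁ τ₁ σ₂ τ₂ hLM f j ≫ (eqToHom e₂) j
  rw [pi_eqToHom_apply, pi_eqToHom_apply]
  refine (isGhom_mor1 hLM' f j).unique (IsGhom.of_mk_eq
    (IsGhom.comp (isGhom_eqToHom f _)
      (IsGhom.comp (isGhom_mor1 hLM f j) (isGhom_eqToHom f _) (Or.inr rfl))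
      (Or.inl rfl)) ?_)
  rw [cgFire_inr_left t₁ j]
  simp

end StepInr

section StepInrMain

variable {B : Type u} [Category.{v} B] {C : Type u'} [Category.{v'} C]
  {wa wb wc n m : ℕ}
  {α : Fin wa → Bool} {β : Fin wb → Bool} {γ : Fin wc → Bool}
  {σ₁ : Fin wa → Fin n} {τ₁ : Fin wb → Fin n}
  {σ₂ : Fin wb → Fin m} {τ₂ : Fin wc → Fin m}
  {X Y : B} {M : CGP wa wb wc → ℕ} {L : CGT n m → Bool}
  {F₁ : PowCat B α ⥤ C} {F₂ : PowCat B β ⥤ C} {F₃ : PowCat B γ ⥤ C}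

theorem step_inr (φ : Transf α β F₁ F₂ σ₁ τ₁) (ψ : Transf β γ F₂ F₃ σ₂ τ₂)
    (hLM : IsLabelledMarking α β γ σ₁ τ₁ σ₂ τ₂ X Y M L) {t₁ : Fin m}
    (hen : cgEnabled α β γ σ₁ τ₁ σ₂ τ₂ M (.inr t₁))
    (hLt : L (.inr t₁) = true)
    (hψ : DinatAt ψ t₁) (f : X ⟶ Y)
    (hLM' : IsLabelledMarking α β γ σ₁ τ₁ σ₂ τ₂ X Y (cgFire α β γ σ₁ τ₁ σ₂ τ₂ M (.inr t₁))
      (fun s : CGT n m => if s = .inr t₁ then false else L s)) :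
    interp α β γ σ₁ τ₁ σ₂ τ₂ φ ψ M L hLM f
      = eqToHom (congrArg F₁.obj (startT_fire_inr hLM hen hLt)) ≫
        interp α β γ σ₁ τ₁ σ₂ τ₂ φ ψ _ _ hLM' f ≫
        eqToHom (congrArg F₃.obj (endT_fire_inr hLM hen hLt)).symm := by
  have hA2 := upd_L2_Y hLM hen hLt
  have hA2' := L2_relabel_inr hLM hen hLt
  have hL1 := L1_relabel_inr hLM hen hLt
  have din := hψ (L2 X Y L) f
  unfold interp
  rw [fac2Y_inr hLM hen hLt f (congrArg (tup β σ₂) hA2),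
      fac2X_inr hLM hen hLt f hLM' (congrArg (tup β τ₁) hL1)
        (congrArg (tup β σ₂) hA2').symm,
      fac3Y_inr hLM hen hLt f (congrArg (tup γ τ₂) hA2).symm,
      fac3X_inr hLM hen hLt f hLM' (congrArg (tup γ τ₂) hA2')
        (endT_fire_inr hLM hen hLt),
      fac1_inr hLM f hLM' (startT_fire_inr hLM hen hLt).symm
        (congrArg (tup α σ₁) hL1).symm,
      transf_conj φ hL1 (by rw [hL1]) (by rw [hL1]),
      transf_conj ψ hA2' (by rw [hA2']) (by rw [hA2'])]
  simp only [Functor.map_comp, Category.assoc, eqToHom_map, eqToHom_trans, eqToHom_refl,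
    Category.comp_id, Category.id_comp, eqToHom_trans_assoc]
  rw [transf_conj_reassoc ψ hA2 (by rw [hA2]) (by rw [hA2])]
  rw [← reassoc_of% din]

end StepInrMain
theorem cgt_beq_self {n m : ℕ} : ∀ (s : CGT n m), (s == s) = true
  | .inl _ => decide_eq_true rfl
  | .inr _ => decide_eq_true rfl

theorem cgt_beq_false {n m : ℕ} {s t : CGT n m} (h : ¬ s = t) : (s == t) = false := by
  cases s <;> cases t
  · exact decide_eq_false (fun he => h (congrArg Sum.inl he))
  · rfl
  · rfl
  · exact decide_eq_false (fun he => h (congrArg Sum.inr he))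

theorem labelled_marking_fire_seq
    {B : Type u} [Category.{v} B] {C : Type u'} [Category.{v'} C]
    {wa wb wc n m : ℕ}
    {α : Fin wa → Bool} {β : Fin wb → Bool} {γ : Fin wc → Bool}
    {σ₁ : Fin wa → Fin n} {τ₁ : Fin wb → Fin n}
    {σ₂ : Fin wb → Fin m} {τ₂ : Fin wc → Fin m}
    {F₁ : PowCat B α ⥤ C} {F₂ : PowCat B β ⥤ C} {F₃ : PowCat B γ ⥤ C}
    (φ : Transf α β F₁ F₂ σ₁ τ₁) (ψ : Transf β γ F₂ F₃ σ₂ τ₂)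
    (hφ : ∀ x, DinatAt φ x) (hψ : ∀ x, DinatAt ψ x)
    {X Y : B} (f : X ⟶ Y)
    (M M' : CGP wa wb wc → ℕ) (L : CGT n m → Bool)
    (hLM : IsLabelledMarking α β γ σ₁ τ₁ σ₂ τ₂ X Y M L)
    (ts : List (CGT n m)) (hnd : ts.Nodup) (hlab : ∀ t ∈ ts, L t = true)
    (hseq : CGFireSeq α β γ σ₁ τ₁ σ₂ τ₂ M ts M') :
    ∃ (hLM' : IsLabelledMarking α β γ σ₁ τ₁ σ₂ τ₂ X Y M'
        (fun s : CGT n m => if ts.contains s then false else L s))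
      (e₁ : startT α σ₁ M L X Y =
        startT α σ₁ M' (fun s : CGT n m => if ts.contains s then false else L s) X Y)
      (e₂ : endT γ τ₂ M L X Y =
        endT γ τ₂ M' (fun s : CGT n m => if ts.contains s then false else L s) X Y),
      interp α β γ σ₁ τ₁ σ₂ τ₂ φ ψ M L hLM f =
        eqToHom (congrArg F₁.obj e₁) ≫
          interp α β γ σ₁ τ₁ σ₂ τ₂ φ ψ M'
            (fun s : CGT n m => if ts.contains s then false else L s) hLM' f ≫
          eqToHom (congrArg F₃.obj e₂).symm := by
  induction ts generalizing M L hLM with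
  | nil =>
    cases hseq
    have hfun : (fun s : CGT n m => if ([] : List (CGT n m)).contains s then false else L s)
        = L := by
      funext s; simp
    rw [hfun]
    exact ⟨hLM, rfl, rfl, by simp⟩
  | cons t ts ih =>
    obtain ⟨ht_nin, hnd'⟩ := List.nodup_cons.mp hnd
    have hLt : L t = true := hlab t (List.mem_cons_self (a := t) (l := ts))
    cases hseq with
    | cons _ _ henb htail =>
      have hLM₁ : IsLabelledMarking α β γ σ₁ τ₁ σ₂ τ₂ X Y (cgFire α β γ σ₁ τ₁ σ₂ τ₂ M t)
          (fun s : CGT n m => if s = t then false else L s) := by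
        cases t with
        | inl t₀ => exact isLM_fire_inl hLM henb hLt
        | inr t₁ => exact isLM_fire_inr hLM henb hLt
      obtain ⟨es₁, es₂, hstep⟩ :
          ∃ (es₁ : startT α σ₁ M L X Y
              = startT α σ₁ (cgFire α β γ σ₁ τ₁ σ₂ τ₂ M t)
                  (fun s : CGT n m => if s = t then false else L s) X Y)
            (es₂ : endT γ τ₂ M L X Y
              = endT γ τ₂ (cgFire α β γ σ₁ τ₁ σ₂ τ₂ M t)
                  (fun s : CGT n m => if s = t then false else L s) X Y),
            interp α β γ σ₁ τ₁ σ₂ τ₂ φ ψ M L hLM f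
              = eqToHom (congrArg F₁.obj es₁) ≫
                interp α β γ σ₁ τ₁ σ₂ τ₂ φ ψ _ _ hLM₁ f ≫
                eqToHom (congrArg F₃.obj es₂).symm := by
        cases t with
        | inl t₀ =>
          exact ⟨startT_fire_inl hLM henb hLt, endT_fire_inl hLM henb hLt,
            step_inl φ ψ hLM henb hLt (hφ t₀) f hLM₁⟩
        | inr t₁ =>
          exact ⟨startT_fire_inr hLM henb hLt, endT_fire_inr hLM henb hLt,
            step_inr φ ψ hLM henb hLt (hψ t₁) f hLM₁⟩
      have hlab' : ∀ s' ∈ ts, (if s' = t then false else L s') = true := by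
        intro s' hs'
        have hne : ¬ s' = t := fun h => ht_nin (h ▸ hs')
        rw [if_neg hne, hlab s' (List.mem_cons_of_mem t hs')]
      obtain ⟨hLM₂, e₁, e₂, hih⟩ :=
        ih (cgFire α β γ σ₁ τ₁ σ₂ τ₂ M t) (fun s : CGT n m => if s = t then false else L s)
          hLM₁ hnd' hlab' htail
      have hfun : (fun s : CGT n m => if ts.contains s then false
              else if s = t then false else L s)
          = (fun s : CGT n m => if (t :: ts).contains s then false else L s) := by
        funext s
        by_cases hst : s = t
        · subst hst
          have hc : (s :: ts).contains s = true := by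
            rw [List.contains_cons, cgt_beq_self]; rfl
          rw [hc]
          by_cases hmem : ts.contains s = true <;> simp [hmem]
        · have hc : (t :: ts).contains s = ts.contains s := by
            rw [List.contains_cons, cgt_beq_false hst, Bool.false_or]
          rw [hc]
          by_cases hmem : ts.contains s = true <;> simp [hmem, hst]
      rw [← hfun]
      exact ⟨hLM₂, es₁.trans e₁, es₂.trans e₂, by
        rw [hstep, hih]
        simp only [Category.assoc, eqToHom_trans, eqToHom_trans_assoc]⟩
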